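/- arXiv:math/0612003 — 3 statements merged into one kernel-verified Lean document; each statement's English description precedes it below -/
import Mathlib

section
/- Let G = (V,E) be a finite connected simple graph and let v0 be a fixed vertex. The number of v0-connected orientations of G equals the number of connected spanning subgraphs of G, i.e. the number of subsets S ⊆ E such that the graph (V,S) is connected. (Both are counted by the Tutte polynomial evaluation T_G(1,2).) -/
/-- An orientation of a simple graph: a choice of direction for each edge. -/
structure GraphOrientation {V : Type*} (G : SimpleGraph V) where
  dir : V → V → Prop
  adj_of_dir : ∀ u v, dir u v → G.Adj u v
  dir_iff_not : ∀ u v, G.Adj u v → (dir u v ↔ ¬ dir v u)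

namespace GraphOrientation

variable {V : Type*} {G : SimpleGraph V}

/-- The outdegree of a vertex: the number of edges directed away from it. -/
noncomputable def outDegree (O : GraphOrientation G) (v : V) : ℕ :=
  {u | O.dir v u}.ncard

/-- `v` is reachable from `u` by a directed path. -/
def Reaches (O : GraphOrientation G) : V → V → Prop :=
  Relation.ReflTransGen O.dir

/-- `C` is the edge set of a directed cycle of the orientation. -/
def IsDirCycle (O : GraphOrientation G) (C : Set (Sym2 V)) : Prop :=
  ∃ (v : V) (w : G.Walk v v), w.IsCycle ∧
    (∀ d ∈ w.darts, O.dir d.toProd.1 d.toProd.2) ∧ C = {e | e ∈ w.edges}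

/-- The orientation is strongly connected. -/
def IsStronglyConnected (O : GraphOrientation G) : Prop := ∀ u v, O.Reaches u v

/-- Every vertex is reachable from `v0`. -/
def IsConnectedFrom (O : GraphOrientation G) (v0 : V) : Prop := ∀ v, O.Reaches v0 v

/-- The set of edges on which two orientations differ. -/
def diffSet (O O' : GraphOrientation G) : Set (Sym2 V) :=
  {e | ∃ a b, e = s(a, b) ∧ O.dir a b ∧ O'.dir b a}

/-- `O'` is obtained from `O` by reversing exactly the edges of `A`. -/
def IsFlipOn (O O' : GraphOrientation G) (A : Set (Sym2 V)) : Prop :=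
  (∀ u v, s(u, v) ∈ A → (O'.dir u v ↔ O.dir v u)) ∧
    (∀ u v, s(u, v) ∉ A → (O'.dir u v ↔ O.dir u v))

/-- One cycle-flip step. -/
def CycleFlip (O O' : GraphOrientation G) : Prop :=
  ∃ C, O.IsDirCycle C ∧ O.IsFlipOn O' C

end GraphOrientation

/-- The cut defined by a vertex subset `U`: edges with exactly one endpoint in `U`. -/
def SimpleGraph.cutSet {V : Type*} (G : SimpleGraph V) (U : Set V) : Set (Sym2 V) :=
  {e | ∃ a b, e = s(a, b) ∧ G.Adj a b ∧ a ∈ U ∧ b ∉ U}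

/-- A cocycle: a minimal nonempty cut. -/
def SimpleGraph.IsCocycle {V : Type*} (G : SimpleGraph V) (D : Set (Sym2 V)) : Prop :=
  D.Nonempty ∧ (∃ U : Set V, D = G.cutSet U) ∧
    ∀ D' : Set (Sym2 V), D'.Nonempty → (∃ U : Set V, D' = G.cutSet U) → D' ⊆ D → D' = D

/-- A directed cocycle: a cocycle all of whose edges are directed toward the same side. -/
def GraphOrientation.IsDirCocycle {V : Type*} {G : SimpleGraph V}
    (O : GraphOrientation G) (D : Set (Sym2 V)) : Prop :=
  G.IsCocycle D ∧ ∃ U : Set V, D = G.cutSet U ∧ ∀ a b, O.dir a b → s(a, b) ∈ D → b ∈ U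

/-- The excess of a subset of vertices with respect to `δ : V → ℕ`. -/
noncomputable def SimpleGraph.excess {V : Type*} (G : SimpleGraph V) (δ : V → ℕ)
    (U : Finset V) : ℤ :=
  (∑ u ∈ U, (δ u : ℤ)) - ({e | e ∈ G.edgeSet ∧ ∀ x ∈ e, x ∈ U} : Set (Sym2 V)).ncard

/-- `C` is the edge set of a cycle of `G`. -/
def SimpleGraph.IsCycleEdgeSet {V : Type*} (G : SimpleGraph V) (C : Set (Sym2 V)) : Prop :=
  ∃ (v : V) (w : G.Walk v v), w.IsCycle ∧ C = {e | e ∈ w.edges}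

/-- The number of connected components of the spanning subgraph `(V, S)`. -/
noncomputable def numComponents (V : Type*) (S : Set (Sym2 V)) : ℕ :=
  Nat.card (SimpleGraph.fromEdgeSet S).ConnectedComponent

/-! ### Auxiliary material for the proof -/

open Relation

section PureRelation

variable {V : Type*}

private lemma rtg_mono {p q : V → V → Prop} {a b : V} (h : ∀ x y, p x y → q x y)
    (hp : ReflTransGen p a b) : ReflTransGen q a b := by
  induction hp with
  | refl => exact .refl
  | tail _ hbc ih => exact ih.tail (h _ _ hbc)

private lemma L_notmem {d r : V → V → Prop} {v0 x y z : V}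
    (hx : ¬ ReflTransGen (fun a b => d a b ∨ r a b) v0 x)
    (h : ReflTransGen (fun a b => (d a b ∨ (a = x ∧ b = y)) ∨ r a b) v0 z) :
    ReflTransGen (fun a b => d a b ∨ r a b) v0 z := by
  induction h with
  | refl => exact .refl
  | tail _ hbc ih =>
    rcases hbc with (hd | ⟨rfl, rfl⟩) | hr
    · exact ih.tail (Or.inl hd)
    · exact absurd ih hx
    · exact ih.tail (Or.inr hr)

private lemma L_memboth {d r : V → V → Prop} {v0 x y z : V}
    (hy : ReflTransGen (fun a b => d a b ∨ r a b) v0 y)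
    (h : ReflTransGen (fun a b => (d a b ∨ (a = x ∧ b = y)) ∨ r a b) v0 z) :
    ReflTransGen (fun a b => d a b ∨ r a b) v0 z := by
  induction h with
  | refl => exact .refl
  | tail _ hbc ih =>
    rcases hbc with (hd | ⟨rfl, rfl⟩) | hr
    · exact ih.tail (Or.inl hd)
    · exact hy
    · exact ih.tail (Or.inr hr)

private lemma L_from_r' {d r r' : V → V → Prop} {v0 x y z : V}
    (hx : ReflTransGen (fun a b => d a b ∨ r a b) v0 x)
    (hsub : ∀ a b, r' a b → r a b ∨ (a = x ∧ b = y) ∨ (a = y ∧ b = x))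
    (h : ReflTransGen (fun a b => d a b ∨ r' a b) v0 z) :
    ReflTransGen (fun a b => (d a b ∨ (a = x ∧ b = y)) ∨ r a b) v0 z := by
  have hx' : ReflTransGen (fun a b => (d a b ∨ (a = x ∧ b = y)) ∨ r a b) v0 x :=
    rtg_mono (fun a b hh => hh.elim (fun t => Or.inl (Or.inl t)) Or.inr) hx
  induction h with
  | refl => exact .refl
  | tail _ hbc ih =>
    rcases hbc with hd | hr'
    · exact ih.tail (Or.inl (Or.inl hd))
    · rcases hsub _ _ hr' with hr | ⟨rfl, rfl⟩ | ⟨rfl, rfl⟩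
      · exact ih.tail (Or.inr hr)
      · exact hx'.tail (Or.inl (Or.inr ⟨rfl, rfl⟩))
      · exact hx'

private lemma L_r'_none {d r r' : V → V → Prop} {v0 x y z : V}
    (hx : ¬ ReflTransGen (fun a b => d a b ∨ r a b) v0 x)
    (hy : ¬ ReflTransGen (fun a b => d a b ∨ r a b) v0 y)
    (hsub : ∀ a b, r' a b → r a b ∨ (a = x ∧ b = y) ∨ (a = y ∧ b = x))
    (h : ReflTransGen (fun a b => d a b ∨ r' a b) v0 z) :
    ReflTransGen (fun a b => d a b ∨ r a b) v0 z := by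
  induction h with
  | refl => exact .refl
  | tail _ hbc ih =>
    rcases hbc with hd | hr'
    · exact ih.tail (Or.inl hd)
    · rcases hsub _ _ hr' with hr | ⟨rfl, rfl⟩ | ⟨rfl, rfl⟩
      · exact ih.tail (Or.inr hr)
      · exact absurd ih hx
      · exact absurd ih hy

end PureRelation

section OrientationOps

variable {V : Type*}

theorem GraphOrientation.ext_dir {G : SimpleGraph V} {O O' : GraphOrientation G}
    (h : O.dir = O'.dir) : O = O' := by
  cases O; cases O'; cases h; rfl

instance {G : SimpleGraph V} [Finite V] : Finite (GraphOrientation G) :=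
  Finite.of_injective (fun O => O.dir) (fun _ _ h => GraphOrientation.ext_dir h)

private lemma dir_ne {G : SimpleGraph V} {u v : V}
    (P : GraphOrientation (G.deleteEdges {s(u, v)})) {a b : V}
    (h : P.dir a b) : s(a, b) ≠ s(u, v) := by
  have := (SimpleGraph.deleteEdges_adj.mp (P.adj_of_dir a b h)).2
  simpa using this

private def restrictOr (G : SimpleGraph V) (u v : V) (O : GraphOrientation G) :
    GraphOrientation (G.deleteEdges {s(u, v)}) where
  dir a b := O.dir a b ∧ s(a, b) ≠ s(u, v)
  adj_of_dir a b h := SimpleGraph.deleteEdges_adj.mpr ⟨O.adj_of_dir a b h.1, by simpa using h.2⟩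
  dir_iff_not a b hab := by
    rw [SimpleGraph.deleteEdges_adj] at hab
    have h1 := O.dir_iff_not a b hab.1
    have hne : s(a, b) ≠ s(u, v) := by simpa using hab.2
    have hne' : s(b, a) ≠ s(u, v) := by rwa [Sym2.eq_swap]
    constructor
    · rintro ⟨h2, -⟩ ⟨h3, -⟩; exact (h1.mp h2) h3
    · intro h2; exact ⟨h1.mpr fun h3 => h2 ⟨h3, hne'⟩, hne⟩

private def extendOr (G : SimpleGraph V) (u v x y : V) (hxy : G.Adj x y)
    (hexy : s(x, y) = s(u, v))
    (P : GraphOrientation (G.deleteEdges {s(u, v)})) : GraphOrientation G where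
  dir a b := P.dir a b ∨ (a = x ∧ b = y)
  adj_of_dir a b h := h.elim
    (fun h' => (SimpleGraph.deleteEdges_adj.mp (P.adj_of_dir a b h')).1)
    (fun h' => h'.1 ▸ h'.2 ▸ hxy)
  dir_iff_not a b hab := by
    by_cases he : s(a, b) = s(u, v)
    · have hab' : s(a, b) = s(x, y) := he.trans hexy.symm
      have hxyne : x ≠ y := hxy.ne
      have hPa : ¬ P.dir a b := fun h => dir_ne P h he
      have hPb : ¬ P.dir b a := fun h => dir_ne P h (Sym2.eq_swap.trans he)
      rcases Sym2.eq_iff.mp hab' with ⟨rfl, rfl⟩ | ⟨rfl, rfl⟩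
      · simp [hPa, hPb, hxyne, hxyne.symm]
      · simp [hPa, hPb, hxyne, hxyne.symm]
    · have hab' : (G.deleteEdges {s(u, v)}).Adj a b :=
        SimpleGraph.deleteEdges_adj.mpr ⟨hab, by simpa using he⟩
      have h1 := P.dir_iff_not a b hab'
      have h2 : ¬(a = x ∧ b = y) := by rintro ⟨rfl, rfl⟩; exact he hexy
      have h3 : ¬(b = x ∧ a = y) := by rintro ⟨rfl, rfl⟩; exact he (Sym2.eq_swap.trans hexy)
      tauto

private lemma extendOr_dir (G : SimpleGraph V) (u v x y : V) (hxy : G.Adj x y)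
    (hexy : s(x, y) = s(u, v)) (P : GraphOrientation (G.deleteEdges {s(u, v)})) :
    (extendOr G u v x y hxy hexy P).dir = fun a b => P.dir a b ∨ (a = x ∧ b = y) := rfl

private lemma extend_restrict {G : SimpleGraph V} {u v x y : V} (hxy : G.Adj x y)
    (hexy : s(x, y) = s(u, v)) (O : GraphOrientation G) (h : O.dir x y) :
    extendOr G u v x y hxy hexy (restrictOr G u v O) = O := by
  apply GraphOrientation.ext_dir
  funext a b
  apply propext
  constructor
  · rintro (⟨h1, -⟩ | ⟨rfl, rfl⟩)
    · exact h1
    · exact h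
  · intro h1
    by_cases he : s(a, b) = s(u, v)
    · rcases Sym2.eq_iff.mp (he.trans hexy.symm) with ⟨rfl, rfl⟩ | ⟨rfl, rfl⟩
      · exact Or.inr ⟨rfl, rfl⟩
      · exact absurd h ((O.dir_iff_not _ _ (O.adj_of_dir _ _ h1)).mp h1)
    · exact Or.inl ⟨h1, he⟩

private lemma restrict_extend {G : SimpleGraph V} {u v x y : V} (hxy : G.Adj x y)
    (hexy : s(x, y) = s(u, v)) (P : GraphOrientation (G.deleteEdges {s(u, v)})) :
    restrictOr G u v (extendOr G u v x y hxy hexy P) = P := by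
  apply GraphOrientation.ext_dir
  funext a b
  apply propext
  constructor
  · rintro ⟨h1 | ⟨rfl, rfl⟩, hne⟩
    · exact h1
    · exact absurd hexy hne
  · intro h1; exact ⟨Or.inl h1, dir_ne P h1⟩

open scoped Classical in
private noncomputable def orEquiv (G : SimpleGraph V) (u v : V) (huv : G.Adj u v) :
    GraphOrientation G ≃ GraphOrientation (G.deleteEdges {s(u, v)}) × Bool where
  toFun O := (restrictOr G u v O, if O.dir u v then true else false)
  invFun P := cond P.2 (extendOr G u v u v huv rfl P.1)
      (extendOr G u v v u huv.symm Sym2.eq_swap P.1)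
  left_inv O := by
    by_cases h : O.dir u v
    · simp only [if_pos h, cond_true]
      exact extend_restrict huv rfl O h
    · have h' : O.dir v u := (O.dir_iff_not v u huv.symm).mpr h
      simp only [if_neg h, cond_false]
      exact extend_restrict huv.symm Sym2.eq_swap O h'
  right_inv := by
    rintro ⟨P, b⟩
    cases b
    · simp only [cond_false]
      refine Prod.ext ?_ ?_
      · exact restrict_extend huv.symm Sym2.eq_swap P
      · have h1 : ¬ P.dir u v := fun h => dir_ne P h rfl
        have h2 : ¬ (extendOr G u v v u huv.symm Sym2.eq_swap P).dir u v := by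
          rintro (h | ⟨rfl, -⟩)
          · exact h1 h
          · exact huv.ne rfl
        simp [h2]
    · simp only [cond_true]
      refine Prod.ext ?_ ?_
      · exact restrict_extend huv rfl P
      · have h2 : (extendOr G u v u v huv rfl P).dir u v := Or.inr ⟨rfl, rfl⟩
        simp [h2]

end OrientationOps

section Counting

open scoped Classical

variable {V : Type*}

private lemma card_bool_subtype (W : Bool → Prop) :
    Nat.card {b : Bool // W b} = (if W true then 1 else 0) + (if W false then 1 else 0) := by
  by_cases h1 : W true <;> by_cases h2 : W false
  · rw [if_pos h1, if_pos h2]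
    have hall : ∀ b, W b := by intro b; cases b <;> assumption
    rw [Nat.card_congr (Equiv.subtypeUnivEquiv hall)]
    simp [Nat.card_eq_fintype_card]
  · rw [if_pos h1, if_neg h2]
    haveI : Nonempty {b : Bool // W b} := ⟨⟨true, h1⟩⟩
    haveI : Subsingleton {b : Bool // W b} := by
      constructor
      rintro ⟨b, hb⟩ ⟨c, hc⟩
      have hb' : b = true := by cases b with | false => exact absurd hb h2 | true => rfl
      have hc' : c = true := by cases c with | false => exact absurd hc h2 | true => rfl
      subst hb'; subst hc'; rfl
    exact Nat.card_unique
  · rw [if_neg h1, if_pos h2]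
    haveI : Nonempty {b : Bool // W b} := ⟨⟨false, h2⟩⟩
    haveI : Subsingleton {b : Bool // W b} := by
      constructor
      rintro ⟨b, hb⟩ ⟨c, hc⟩
      have hb' : b = false := by cases b with | false => rfl | true => exact absurd hb h1
      have hc' : c = false := by cases c with | false => rfl | true => exact absurd hc h1
      subst hb'; subst hc'; rfl
    exact Nat.card_unique
  · rw [if_neg h1, if_neg h2]
    haveI : IsEmpty {b : Bool // W b} := by
      constructor
      rintro ⟨b, hb⟩
      cases b
      · exact h2 hb
      · exact h1 hb
    simp [Nat.card_of_isEmpty]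

private lemma sum_card_eq {α : Type*} [Fintype α] (A B : α → Prop) :
    (∑ P : α, ((if A P then 1 else 0) + (if B P then 1 else 0)))
      = Nat.card {P // A P} + Nat.card {P // B P} := by
  rw [Finset.sum_add_distrib, Finset.sum_boole, Finset.sum_boole]
  simp [Nat.card_eq_fintype_card, Fintype.card_subtype]

end Counting

section MainArgument

open scoped Classical

variable {V : Type*}

/-- Connectivity of an orientation from `v0` modulo an auxiliary relation `r`. -/
private def OConn (G : SimpleGraph V) (v0 : V) (r : V → V → Prop)
    (O : GraphOrientation G) : Prop :=
  ∀ w, ReflTransGen (fun a b => O.dir a b ∨ r a b) v0 w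

/-- Connectivity of an edge subset from `v0` modulo an auxiliary relation `r`. -/
private def SConn (v0 : V) (r : V → V → Prop) (S : Set (Sym2 V)) : Prop :=
  ∀ w, ReflTransGen (fun a b => s(a, b) ∈ S ∨ r a b) v0 w

private lemma card_fiber_or [Fintype V] (G : SimpleGraph V) (v0 u v : V) (huv : G.Adj u v)
    (r : V → V → Prop) (P : GraphOrientation (G.deleteEdges {s(u, v)})) :
    Nat.card {b : Bool // OConn G v0 r ((orEquiv G u v huv).symm (P, b))} =
      (if OConn (G.deleteEdges {s(u, v)}) v0 r P then 1 else 0) +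
      (if OConn (G.deleteEdges {s(u, v)}) v0
          (fun a b => r a b ∨ (a = u ∧ b = v) ∨ (a = v ∧ b = u)) P then 1 else 0) := by
  rw [card_bool_subtype]
  have hsymT : (orEquiv G u v huv).symm (P, true) = extendOr G u v u v huv rfl P := rfl
  have hsymF : (orEquiv G u v huv).symm (P, false)
      = extendOr G u v v u huv.symm Sym2.eq_swap P := rfl
  have e1 : OConn G v0 r ((orEquiv G u v huv).symm (P, true)) ↔
      (∀ w, ReflTransGen (fun a b => (P.dir a b ∨ (a = u ∧ b = v)) ∨ r a b) v0 w) := by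
    rw [hsymT]; simp only [OConn, extendOr_dir]
  have e2 : OConn G v0 r ((orEquiv G u v huv).symm (P, false)) ↔
      (∀ w, ReflTransGen (fun a b => (P.dir a b ∨ (a = v ∧ b = u)) ∨ r a b) v0 w) := by
    rw [hsymF]; simp only [OConn, extendOr_dir]
  have e3 : OConn (G.deleteEdges {s(u, v)}) v0 r P ↔
      (∀ w, ReflTransGen (fun a b => P.dir a b ∨ r a b) v0 w) := Iff.rfl
  have e4 : OConn (G.deleteEdges {s(u, v)}) v0
      (fun a b => r a b ∨ (a = u ∧ b = v) ∨ (a = v ∧ b = u)) P ↔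
      (∀ w, ReflTransGen
        (fun a b => P.dir a b ∨ (r a b ∨ (a = u ∧ b = v) ∨ (a = v ∧ b = u))) v0 w) := Iff.rfl
  simp only [e1, e2, e3, e4]
  by_cases h1 : ∀ w, ReflTransGen (fun a b => P.dir a b ∨ r a b) v0 w
  · have t1 : ∀ w, ReflTransGen (fun a b => (P.dir a b ∨ (a = u ∧ b = v)) ∨ r a b) v0 w :=
      fun w => rtg_mono (fun a b h => by tauto) (h1 w)
    have t2 : ∀ w, ReflTransGen (fun a b => (P.dir a b ∨ (a = v ∧ b = u)) ∨ r a b) v0 w :=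
      fun w => rtg_mono (fun a b h => by tauto) (h1 w)
    have h1' : ∀ w, ReflTransGen
        (fun a b => P.dir a b ∨ (r a b ∨ (a = u ∧ b = v) ∨ (a = v ∧ b = u))) v0 w :=
      fun w => rtg_mono (fun a b h => by tauto) (h1 w)
    simp [t1, t2, h1, h1']
  · by_cases h2 : ∀ w, ReflTransGen
        (fun a b => P.dir a b ∨ (r a b ∨ (a = u ∧ b = v) ∨ (a = v ∧ b = u))) v0 w
    · have hnotboth : ¬ ((∀ w, ReflTransGen
          (fun a b => (P.dir a b ∨ (a = u ∧ b = v)) ∨ r a b) v0 w) ∧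
          (∀ w, ReflTransGen (fun a b => (P.dir a b ∨ (a = v ∧ b = u)) ∨ r a b) v0 w)) := by
        rintro ⟨w1, w2⟩
        refine h1 (fun w => ?_)
        by_cases hu' : ReflTransGen (fun a b => P.dir a b ∨ r a b) v0 u
        · by_cases hv' : ReflTransGen (fun a b => P.dir a b ∨ r a b) v0 v
          · exact L_memboth hv' (w1 w)
          · exact L_notmem hv' (w2 w)
        · exact L_notmem hu' (w1 w)
      have hone : (∀ w, ReflTransGen
          (fun a b => (P.dir a b ∨ (a = u ∧ b = v)) ∨ r a b) v0 w) ∨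
          (∀ w, ReflTransGen (fun a b => (P.dir a b ∨ (a = v ∧ b = u)) ∨ r a b) v0 w) := by
        by_cases hu' : ReflTransGen (fun a b => P.dir a b ∨ r a b) v0 u
        · exact Or.inl (fun w => L_from_r' hu' (fun a b h => by tauto) (h2 w))
        · by_cases hv' : ReflTransGen (fun a b => P.dir a b ∨ r a b) v0 v
          · exact Or.inr (fun w => L_from_r' hv' (fun a b h => by tauto) (h2 w))
          · exact absurd (fun w => L_r'_none hu' hv' (fun a b h => by tauto) (h2 w)) h1
      rcases hone with hw | hw
      · have hnw : ¬ (∀ w, ReflTransGen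
            (fun a b => (P.dir a b ∨ (a = v ∧ b = u)) ∨ r a b) v0 w) :=
          fun h => hnotboth ⟨hw, h⟩
        simp [hw, hnw, h1, h2]
      · have hnw : ¬ (∀ w, ReflTransGen
            (fun a b => (P.dir a b ∨ (a = u ∧ b = v)) ∨ r a b) v0 w) :=
          fun h => hnotboth ⟨h, hw⟩
        simp [hw, hnw, h1, h2]
    · have nt : ¬ (∀ w, ReflTransGen
          (fun a b => (P.dir a b ∨ (a = u ∧ b = v)) ∨ r a b) v0 w) :=
        fun hw => h2 (fun w => rtg_mono (fun a b h => by tauto) (hw w))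
      have nf : ¬ (∀ w, ReflTransGen
          (fun a b => (P.dir a b ∨ (a = v ∧ b = u)) ∨ r a b) v0 w) :=
        fun hw => h2 (fun w => rtg_mono (fun a b h => by tauto) (hw w))
      simp [nt, nf, h1, h2]

private lemma orient_split [Fintype V] (G : SimpleGraph V) (v0 u v : V) (huv : G.Adj u v)
    (r : V → V → Prop) :
    Nat.card {O : GraphOrientation G // OConn G v0 r O} =
      Nat.card {P : GraphOrientation (G.deleteEdges {s(u, v)}) //
        OConn (G.deleteEdges {s(u, v)}) v0 r P} +
      Nat.card {P : GraphOrientation (G.deleteEdges {s(u, v)}) //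
        OConn (G.deleteEdges {s(u, v)}) v0
          (fun a b => r a b ∨ (a = u ∧ b = v) ∨ (a = v ∧ b = u)) P} := by
  haveI : Fintype (GraphOrientation (G.deleteEdges {s(u, v)})) := Fintype.ofFinite _
  have e1 : {O : GraphOrientation G // OConn G v0 r O} ≃
      {pb : GraphOrientation (G.deleteEdges {s(u, v)}) × Bool //
        OConn G v0 r ((orEquiv G u v huv).symm (pb.1, pb.2))} :=
    (orEquiv G u v huv).subtypeEquiv (fun O => by
      rw [Prod.mk.eta, Equiv.symm_apply_apply])
  rw [Nat.card_congr e1, Nat.card_congr (Equiv.subtypeProdEquivSigmaSubtype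
      (fun P b => OConn G v0 r ((orEquiv G u v huv).symm (P, b)))),
    Nat.card_eq_fintype_card, Fintype.card_sigma, ← sum_card_eq]
  apply Finset.sum_congr rfl
  intro P _
  rw [← Nat.card_eq_fintype_card]
  exact card_fiber_or G v0 u v huv r P

private noncomputable def subEquiv (G : SimpleGraph V) (u v : V) (huv : G.Adj u v) :
    {S : Set (Sym2 V) // S ⊆ G.edgeSet} ≃
      {S : Set (Sym2 V) // S ⊆ (G.deleteEdges {s(u, v)}).edgeSet} × Bool where
  toFun S := (⟨S.1 \ {s(u, v)}, by
      rw [SimpleGraph.edgeSet_deleteEdges]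
      exact Set.diff_subset_diff_left S.2⟩,
    if s(u, v) ∈ S.1 then true else false)
  invFun p := ⟨cond p.2 (p.1.1 ∪ {s(u, v)}) p.1.1, by
    obtain ⟨⟨S₀, hS₀⟩, b⟩ := p
    have hs : S₀ ⊆ G.edgeSet := hS₀.trans (by
      rw [SimpleGraph.edgeSet_deleteEdges]; exact Set.diff_subset)
    cases b
    · exact hs
    · exact Set.union_subset hs (by simp [SimpleGraph.mem_edgeSet, huv])⟩
  left_inv S := by
    obtain ⟨S, hS⟩ := S
    by_cases h : s(u, v) ∈ S
    · simp only [if_pos h, cond_true]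
      exact Subtype.ext (Set.diff_union_of_subset (Set.singleton_subset_iff.mpr h))
    · simp only [if_neg h, cond_false]
      exact Subtype.ext (Set.diff_singleton_eq_self h)
  right_inv p := by
    obtain ⟨⟨S₀, hS₀⟩, b⟩ := p
    have hnot : s(u, v) ∉ S₀ := fun h => by
      have := hS₀ h
      rw [SimpleGraph.edgeSet_deleteEdges] at this
      exact this.2 rfl
    cases b
    · simp only [cond_false]
      refine Prod.ext (Subtype.ext ?_) ?_
      · exact Set.diff_singleton_eq_self hnot
      · simp [hnot]
    · simp only [cond_true]
      refine Prod.ext (Subtype.ext ?_) ?_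
      · simp [Set.union_diff_distrib, Set.diff_singleton_eq_self hnot]
      · simp

private lemma card_fiber_sub [Fintype V] (G : SimpleGraph V) (v0 u v : V) (huv : G.Adj u v)
    (r : V → V → Prop) (S₀h : {S : Set (Sym2 V) // S ⊆ (G.deleteEdges {s(u, v)}).edgeSet}) :
    Nat.card {b : Bool // SConn v0 r ((subEquiv G u v huv).symm (S₀h, b)).1} =
      (if SConn v0 r S₀h.1 then 1 else 0) +
      (if SConn v0 (fun a b => r a b ∨ (a = u ∧ b = v) ∨ (a = v ∧ b = u)) S₀h.1
        then 1 else 0) := by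
  rw [card_bool_subtype]
  have hT : ((subEquiv G u v huv).symm (S₀h, true)).1 = S₀h.1 ∪ {s(u, v)} := rfl
  have hF : ((subEquiv G u v huv).symm (S₀h, false)).1 = S₀h.1 := rfl
  have e1 : SConn v0 r ((subEquiv G u v huv).symm (S₀h, true)).1 ↔
      SConn v0 (fun a b => r a b ∨ (a = u ∧ b = v) ∨ (a = v ∧ b = u)) S₀h.1 := by
    rw [hT]
    constructor <;> intro h w <;> refine rtg_mono (fun a b hh => ?_) (h w) <;>
      · simp only [Set.mem_union, Set.mem_singleton_iff, Sym2.eq_iff] at hh ⊢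
        tauto
  have e2 : SConn v0 r ((subEquiv G u v huv).symm (S₀h, false)).1 ↔
      SConn v0 r S₀h.1 := by rw [hF]
  simp only [e1, e2]
  exact add_comm _ _

private lemma sub_split [Fintype V] (G : SimpleGraph V) (v0 u v : V) (huv : G.Adj u v)
    (r : V → V → Prop) :
    Nat.card {S : Set (Sym2 V) // S ⊆ G.edgeSet ∧ SConn v0 r S} =
      Nat.card {S : Set (Sym2 V) //
        S ⊆ (G.deleteEdges {s(u, v)}).edgeSet ∧ SConn v0 r S} +
      Nat.card {S : Set (Sym2 V) // S ⊆ (G.deleteEdges {s(u, v)}).edgeSet ∧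
        SConn v0 (fun a b => r a b ∨ (a = u ∧ b = v) ∨ (a = v ∧ b = u)) S} := by
  haveI : Fintype {S : Set (Sym2 V) // S ⊆ (G.deleteEdges {s(u, v)}).edgeSet} :=
    Fintype.ofFinite _
  have c1 : Nat.card {S : Set (Sym2 V) // S ⊆ G.edgeSet ∧ SConn v0 r S}
      = Nat.card {x : {S : Set (Sym2 V) // S ⊆ G.edgeSet} // SConn v0 r x.1} :=
    (Nat.card_congr (Equiv.subtypeSubtypeEquivSubtypeInter _ _)).symm
  have c2 : Nat.card {S : Set (Sym2 V) //
      S ⊆ (G.deleteEdges {s(u, v)}).edgeSet ∧ SConn v0 r S}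
      = Nat.card {x : {S : Set (Sym2 V) // S ⊆ (G.deleteEdges {s(u, v)}).edgeSet} //
          SConn v0 r x.1} :=
    (Nat.card_congr (Equiv.subtypeSubtypeEquivSubtypeInter _ _)).symm
  have c3 : Nat.card {S : Set (Sym2 V) // S ⊆ (G.deleteEdges {s(u, v)}).edgeSet ∧
      SConn v0 (fun a b => r a b ∨ (a = u ∧ b = v) ∨ (a = v ∧ b = u)) S}
      = Nat.card {x : {S : Set (Sym2 V) // S ⊆ (G.deleteEdges {s(u, v)}).edgeSet} //
          SConn v0 (fun a b => r a b ∨ (a = u ∧ b = v) ∨ (a = v ∧ b = u)) x.1} :=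
    (Nat.card_congr (Equiv.subtypeSubtypeEquivSubtypeInter _ _)).symm
  rw [c1, c2, c3]
  have e1 : {x : {S : Set (Sym2 V) // S ⊆ G.edgeSet} // SConn v0 r x.1} ≃
      {q : {S : Set (Sym2 V) // S ⊆ (G.deleteEdges {s(u, v)}).edgeSet} × Bool //
        SConn v0 r ((subEquiv G u v huv).symm (q.1, q.2)).1} :=
    (subEquiv G u v huv).subtypeEquiv (fun S => by
      rw [Prod.mk.eta, Equiv.symm_apply_apply])
  rw [Nat.card_congr e1, Nat.card_congr (Equiv.subtypeProdEquivSigmaSubtype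
      (fun S₀h b => SConn v0 r ((subEquiv G u v huv).symm (S₀h, b)).1)),
    Nat.card_eq_fintype_card, Fintype.card_sigma, ← sum_card_eq]
  apply Finset.sum_congr rfl
  intro S₀h _
  rw [← Nat.card_eq_fintype_card]
  exact card_fiber_sub G v0 u v huv r S₀h

private lemma base_case [Fintype V] (G : SimpleGraph V) (hE : G.edgeSet = ∅) (v0 : V)
    (r : V → V → Prop) :
    Nat.card {O : GraphOrientation G // OConn G v0 r O} =
      Nat.card {S : Set (Sym2 V) // S ⊆ G.edgeSet ∧ SConn v0 r S} := by
  have hAdj : ∀ a b, ¬ G.Adj a b := fun a b h => by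
    rw [← SimpleGraph.mem_edgeSet, hE] at h
    exact h
  have hdirF : ∀ (O : GraphOrientation G) a b, ¬ O.dir a b :=
    fun O a b h => hAdj a b (O.adj_of_dir a b h)
  by_cases hr : ∀ w, ReflTransGen r v0 w
  · haveI i1 : Nonempty {O : GraphOrientation G // OConn G v0 r O} :=
      ⟨⟨⟨fun _ _ => False, fun a b h => h.elim, fun a b h => absurd h (hAdj a b)⟩,
        fun w => rtg_mono (fun a b h => Or.inr h) (hr w)⟩⟩
    haveI s1 : Subsingleton {O : GraphOrientation G // OConn G v0 r O} := by
      constructor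
      rintro ⟨O, hO⟩ ⟨O', hO'⟩
      refine Subtype.ext (GraphOrientation.ext_dir ?_)
      funext a b
      exact propext ⟨fun h => absurd h (hdirF O a b), fun h => absurd h (hdirF O' a b)⟩
    haveI i2 : Nonempty {S : Set (Sym2 V) // S ⊆ G.edgeSet ∧ SConn v0 r S} :=
      ⟨⟨∅, Set.empty_subset _, fun w => rtg_mono (fun a b h => Or.inr h) (hr w)⟩⟩
    haveI s2 : Subsingleton {S : Set (Sym2 V) // S ⊆ G.edgeSet ∧ SConn v0 r S} := by
      constructor
      rintro ⟨S, hS, -⟩ ⟨S', hS', -⟩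
      refine Subtype.ext ?_
      rw [hE] at hS hS'
      show S = S'
      rw [Set.subset_empty_iff.mp hS, Set.subset_empty_iff.mp hS']
    rw [Nat.card_unique, Nat.card_unique]
  · haveI i1 : IsEmpty {O : GraphOrientation G // OConn G v0 r O} := by
      constructor
      rintro ⟨O, hO⟩
      exact hr fun w => rtg_mono
        (fun a b h => h.elim (fun hd => absurd hd (hdirF O a b)) id) (hO w)
    haveI i2 : IsEmpty {S : Set (Sym2 V) // S ⊆ G.edgeSet ∧ SConn v0 r S} := by
      constructor
      rintro ⟨S, hS, hSc⟩
      refine hr fun w => rtg_mono (fun a b h => ?_) (hSc w)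
      rcases h with hm | hr'
      · have := hS hm
        rw [hE] at this
        exact this.elim
      · exact hr'
    rw [Nat.card_of_isEmpty, Nat.card_of_isEmpty]

private lemma key_lemma [Fintype V] (v0 : V) :
    ∀ (n : ℕ) (G : SimpleGraph V), G.edgeSet.ncard ≤ n → ∀ r : V → V → Prop,
      Nat.card {O : GraphOrientation G // OConn G v0 r O} =
        Nat.card {S : Set (Sym2 V) // S ⊆ G.edgeSet ∧ SConn v0 r S} := by
  intro n
  induction n with
  | zero =>
    intro G hG r
    have hE : G.edgeSet = ∅ :=
      (Set.ncard_eq_zero (Set.toFinite G.edgeSet)).mp (Nat.le_zero.mp hG)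
    exact base_case G hE v0 r
  | succ n ih =>
    intro G hG r
    by_cases hE : G.edgeSet = ∅
    · exact base_case G hE v0 r
    · obtain ⟨e, he⟩ := Set.nonempty_iff_ne_empty.mpr hE
      induction e using Sym2.ind with
      | _ u v =>
        have huv : G.Adj u v := (SimpleGraph.mem_edgeSet G).mp he
        have hG' : (G.deleteEdges {s(u, v)}).edgeSet.ncard ≤ n := by
          rw [SimpleGraph.edgeSet_deleteEdges]
          have := Set.ncard_diff_singleton_lt_of_mem he (Set.toFinite _)
          omega
        rw [orient_split G v0 u v huv r, sub_split G v0 u v huv r,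
          ih (G.deleteEdges {s(u, v)}) hG' r,
          ih (G.deleteEdges {s(u, v)}) hG'
            (fun a b => r a b ∨ (a = u ∧ b = v) ∨ (a = v ∧ b = u))]

end MainArgument

theorem statement12 {V : Type*} [Fintype V] (G : SimpleGraph V) (hG : G.Connected)
    (v0 : V) :
    {O : GraphOrientation G | O.IsConnectedFrom v0}.ncard =
      {S : Set (Sym2 V) | S ⊆ G.edgeSet ∧ (SimpleGraph.fromEdgeSet S).Connected}.ncard := by
  classical
  haveI : Nonempty V := hG.nonempty
  rw [← Nat.card_coe_set_eq, ← Nat.card_coe_set_eq]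
  have hL : {O : GraphOrientation G | O.IsConnectedFrom v0}
      = {O : GraphOrientation G | OConn G v0 (fun _ _ => False) O} := by
    ext O
    simp only [Set.mem_setOf_eq, GraphOrientation.IsConnectedFrom, GraphOrientation.Reaches,
      OConn]
    constructor <;> intro h w <;> exact rtg_mono (fun a b hh => by tauto) (h w)
  have hR : {S : Set (Sym2 V) | S ⊆ G.edgeSet ∧ (SimpleGraph.fromEdgeSet S).Connected}
      = {S : Set (Sym2 V) | S ⊆ G.edgeSet ∧ SConn v0 (fun _ _ => False) S} := by
    ext S
    simp only [Set.mem_setOf_eq]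
    constructor
    · rintro ⟨hS, hc⟩
      refine ⟨hS, fun w => ?_⟩
      have h1 := hc.preconnected v0 w
      rw [SimpleGraph.reachable_iff_reflTransGen] at h1
      exact rtg_mono (fun a b hh => Or.inl ((SimpleGraph.fromEdgeSet_adj S).mp hh).1) h1
    · rintro ⟨hS, hc⟩
      have hreach : ∀ w, (SimpleGraph.fromEdgeSet S).Reachable v0 w := by
        intro w
        rw [SimpleGraph.reachable_iff_reflTransGen]
        refine rtg_mono (fun a b hh => ?_) (hc w)
        rcases hh with hm | hf
        · refine (SimpleGraph.fromEdgeSet_adj S).mpr ⟨hm, ?_⟩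
          rintro rfl
          exact G.loopless.irrefl a ((SimpleGraph.mem_edgeSet G).mp (hS hm))
        · exact hf.elim
      exact ⟨hS, ⟨fun a b => (hreach a).symm.trans (hreach b)⟩⟩
  rw [hL, hR]
  exact key_lemma v0 G.edgeSet.ncard G le_rfl (fun _ _ => False)
end

section
/- Let G = (V,E) be a finite connected simple graph. The number of acyclic orientations of G equals Σ_{S ⊆ E} (−1)^{|S| + c(S) − |V|}, where c(S) is the number of connected components of the spanning subgraph (V,S). (This sum is the Tutte polynomial evaluation T_G(2,0) via the subgraph expansion.) -/
namespace St16
open Relation SimpleGraph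

variable {V : Type*}

/-- extensionality for orientations -/
lemma orient_ext {G : SimpleGraph V} {O O' : GraphOrientation G}
    (h : ∀ a b, O.dir a b ↔ O'.dir a b) : O = O' := by
  cases O; cases O'
  simp only [GraphOrientation.mk.injEq]
  funext a b
  exact propext (h a b)

instance {G : SimpleGraph V} [Finite V] : Finite (GraphOrientation G) := by
  apply Finite.of_injective (fun O => O.dir)
  intro O O' h
  simp only at h
  exact orient_ext (fun a b => by rw [h])

/-- extract a `d`-edge from a reflexive-transitive chain of `d ∨ r` -/
lemma extractD {d r : V → V → Prop} {p q : V}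
    (h : ReflTransGen (fun a b => d a b ∨ r a b) p q) :
    ReflTransGen r p q ∨ ∃ a b, ReflTransGen (fun a b => d a b ∨ r a b) p a ∧ d a b ∧
      ReflTransGen (fun a b => d a b ∨ r a b) b q := by
  induction h with
  | refl => exact Or.inl ReflTransGen.refl
  | tail hpc hstep ih =>
    rcases hstep with hd | hr
    · exact Or.inr ⟨_, _, hpc, hd, ReflTransGen.refl⟩
    · rcases ih with h1 | ⟨a, b, h1, h2, h3⟩
      · exact Or.inl (h1.tail hr)
      · exact Or.inr ⟨a, b, h1, h2, h3.tail (Or.inr hr)⟩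

/-- decompose a chain of `s ∨ (x→y)` when there is no `s`-chain from `y` to `x` -/
lemma decompOne {s : V → V → Prop} {x y p q : V} (hyx : ¬ ReflTransGen s y x)
    (h : ReflTransGen (fun a b => s a b ∨ (a = x ∧ b = y)) p q) :
    ReflTransGen s p q ∨ (ReflTransGen s p x ∧ ReflTransGen s y q) := by
  induction h with
  | refl => exact Or.inl ReflTransGen.refl
  | tail hpc hstep ih =>
    rcases hstep with hs | ⟨rfl, rfl⟩
    · rcases ih with h1 | ⟨h1, h2⟩
      · exact Or.inl (h1.tail hs)
      · exact Or.inr ⟨h1, h2.tail hs⟩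
    · rcases ih with h1 | ⟨h1, h2⟩
      · exact Or.inr ⟨h1, ReflTransGen.refl⟩
      · exact absurd h2 hyx

/-- decompose a chain of `s ∨ {x↔y}` when `x,y` are not `s`-connected either way -/
lemma decompTwo {s : V → V → Prop} {x y p q : V}
    (hxy : ¬ ReflTransGen s x y) (hyx : ¬ ReflTransGen s y x)
    (h : ReflTransGen (fun a b => s a b ∨ ((a = x ∧ b = y) ∨ (a = y ∧ b = x))) p q) :
    ReflTransGen s p q ∨ (ReflTransGen s p x ∧ ReflTransGen s y q) ∨
      (ReflTransGen s p y ∧ ReflTransGen s x q) := by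
  induction h with
  | refl => exact Or.inl ReflTransGen.refl
  | tail hpc hstep ih =>
    rcases hstep with hs | ⟨rfl, rfl⟩ | ⟨rfl, rfl⟩
    · rcases ih with h1 | ⟨h1, h2⟩ | ⟨h1, h2⟩
      · exact Or.inl (h1.tail hs)
      · exact Or.inr (Or.inl ⟨h1, h2.tail hs⟩)
      · exact Or.inr (Or.inr ⟨h1, h2.tail hs⟩)
    · rcases ih with h1 | ⟨h1, h2⟩ | ⟨h1, h2⟩
      · exact Or.inr (Or.inl ⟨h1, ReflTransGen.refl⟩)
      · exact absurd h2 hyx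
      · exact Or.inl h1
    · rcases ih with h1 | ⟨h1, h2⟩ | ⟨h1, h2⟩
      · exact Or.inr (Or.inr ⟨h1, ReflTransGen.refl⟩)
      · exact Or.inl h1
      · exact absurd h2 hxy

lemma rtg_congr {r s : V → V → Prop} (h : ∀ a b, r a b ↔ s a b) {x y : V} :
    ReflTransGen r x y ↔ ReflTransGen s x y :=
  ⟨fun hh => ReflTransGen.mono (fun a b hab => (h a b).1 hab) _ _ hh,
   fun hh => ReflTransGen.mono (fun a b hab => (h a b).2 hab) _ _ hh⟩


section Walks
variable {G : SimpleGraph V} (O : GraphOrientation G)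

lemma walk_of_rtg {b a : V} (h : ReflTransGen O.dir b a) :
    ∃ w : G.Walk b a, ∀ d ∈ w.darts, O.dir d.toProd.1 d.toProd.2 := by
  induction h with
  | refl => exact ⟨SimpleGraph.Walk.nil, by simp⟩
  | tail hpc hstep ih =>
    obtain ⟨w, hw⟩ := ih
    refine ⟨w.append (SimpleGraph.Walk.cons (O.adj_of_dir _ _ hstep) SimpleGraph.Walk.nil), ?_⟩
    intro d hd
    rw [SimpleGraph.Walk.darts_append, List.mem_append] at hd
    rcases hd with hd | hd
    · exact hw d hd
    · simp only [SimpleGraph.Walk.darts_cons, SimpleGraph.Walk.darts_nil,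
        List.mem_singleton] at hd
      subst hd
      exact hstep

lemma rtg_of_walk {x y : V} (w : G.Walk x y) (h : ∀ d ∈ w.darts, O.dir d.toProd.1 d.toProd.2) :
    ReflTransGen O.dir x y := by
  induction w with
  | nil => exact ReflTransGen.refl
  | cons hadj p ih =>
    have h1 := h ⟨(_, _), hadj⟩ (by simp [SimpleGraph.Walk.darts_cons])
    refine ReflTransGen.head h1 (ih ?_)
    intro d hd
    exact h d (by simp [SimpleGraph.Walk.darts_cons, hd])

lemma dart_snd_mem_tail {x y : V} (w : G.Walk x y) {d : G.Dart} (hd : d ∈ w.darts) :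
    d.toProd.2 ∈ w.support.tail := by
  induction w with
  | nil => simp at hd
  | cons hadj p ih =>
    rw [SimpleGraph.Walk.darts_cons, List.mem_cons] at hd
    rw [SimpleGraph.Walk.support_cons, List.tail_cons]
    rcases hd with rfl | hd
    · exact SimpleGraph.Walk.start_mem_support p
    · exact List.mem_of_mem_tail (ih hd)
end Walks

section Acyc
variable {G : SimpleGraph V}

/-- step relation of an orientation together with contracted edges `T` -/
def stp (O : GraphOrientation G) (T : Finset (Sym2 V)) : V → V → Prop :=
  fun a b => O.dir a b ∨ s(a, b) ∈ T

/-- acyclicity of an orientation relative to contracted edges `T` -/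
def AcycT (O : GraphOrientation G) (T : Finset (Sym2 V)) : Prop :=
  ∀ a b, O.dir a b → ¬ ReflTransGen (stp O T) b a

lemma no_dircycle_iff [DecidableEq V] (O : GraphOrientation G) :
    (¬ ∃ C : Set (Sym2 V), O.IsDirCycle C) ↔
      ∀ a b, O.dir a b → ¬ ReflTransGen O.dir b a := by
  constructor
  · intro hnc a b hab hba
    apply hnc
    obtain ⟨w, hw⟩ := walk_of_rtg O hba
    have hq : ∀ d ∈ w.bypass.darts, O.dir d.toProd.1 d.toProd.2 :=
      fun d hd => hw d (SimpleGraph.Walk.darts_bypass_subset w hd)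
    have hqp : w.bypass.IsPath := SimpleGraph.Walk.bypass_isPath w
    have hadj : G.Adj a b := O.adj_of_dir a b hab
    have hcyc : (SimpleGraph.Walk.cons hadj w.bypass).IsCycle := by
      rw [SimpleGraph.Walk.cons_isCycle_iff]
      refine ⟨hqp, ?_⟩
      intro hmem
      -- find the dart with this edge
      rw [SimpleGraph.Walk.edges, List.mem_map] at hmem
      obtain ⟨d, hd, hde⟩ := hmem
      have hdir := hq d hd
      have : s(d.toProd.1, d.toProd.2) = s(a, b) := hde
      rw [Sym2.eq_iff] at this
      rcases this with ⟨h1, h2⟩ | ⟨h1, h2⟩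
      · -- dart (a,b) : then b appears in the tail of the support of the path from b
        have hb : d.toProd.2 ∈ w.bypass.support.tail := dart_snd_mem_tail w.bypass hd
        rw [h2] at hb
        have hnodup := hqp.support_nodup
        rw [SimpleGraph.Walk.support_eq_cons] at hnodup
        exact (List.nodup_cons.mp hnodup).1 hb
      · -- dart (b,a) : contradicts dir a b
        rw [h1, h2] at hdir
        exact (O.dir_iff_not a b hadj).mp hab hdir
    exact ⟨_, a, SimpleGraph.Walk.cons hadj w.bypass, hcyc, by
      intro d hd
      rw [SimpleGraph.Walk.darts_cons, List.mem_cons] at hd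
      rcases hd with rfl | hd
      · exact hab
      · exact hq d hd, rfl⟩
  · rintro hac ⟨C, v, w, hcyc, hdir, -⟩
    cases w with
    | nil => exact hcyc.not_nil SimpleGraph.Walk.Nil.nil
    | cons hadj p =>
      have h1 := hdir ⟨(_, _), hadj⟩ (by simp [SimpleGraph.Walk.darts_cons])
      have h2 : ReflTransGen O.dir _ v := rtg_of_walk O p (fun d hd =>
        hdir d (by simp [SimpleGraph.Walk.darts_cons, hd]))
      exact hac _ _ h1 h2

end Acyc


section Components
open SimpleGraph

lemma walk_const {G : SimpleGraph V} {β : Sort*} (f : V → β)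
    (h : ∀ a b, G.Adj a b → f a = f b) {x y : V} (p : G.Walk x y) : f x = f y := by
  induction p with
  | nil => rfl
  | cons ha p ih => exact (h _ _ ha).trans ih

/-- lift an adjacency-constant function to connected components -/
def ccLiftAdj {G : SimpleGraph V} {β : Sort*} (f : V → β)
    (h : ∀ a b, G.Adj a b → f a = f b) : G.ConnectedComponent → β :=
  SimpleGraph.ConnectedComponent.lift f (fun _ _ p _ => walk_const f h p)

@[simp] lemma ccLiftAdj_mk {G : SimpleGraph V} {β : Sort*} (f : V → β)
    (h : ∀ a b, G.Adj a b → f a = f b) (v : V) :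
    ccLiftAdj f h (G.connectedComponentMk v) = f v :=
  SimpleGraph.ConnectedComponent.lift_mk

/-- map on components induced by reachability-monotone comparison -/
def ccMap {G H : SimpleGraph V} (h : ∀ a b, G.Reachable a b → H.Reachable a b) :
    G.ConnectedComponent → H.ConnectedComponent :=
  SimpleGraph.ConnectedComponent.lift H.connectedComponentMk
    (fun _ _ p _ => SimpleGraph.ConnectedComponent.sound (h _ _ ⟨p⟩))

@[simp] lemma ccMap_mk {G H : SimpleGraph V} (h : ∀ a b, G.Reachable a b → H.Reachable a b)
    (v : V) : ccMap h (G.connectedComponentMk v) = H.connectedComponentMk v :=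
  SimpleGraph.ConnectedComponent.lift_mk

lemma card_cc_congr {G H : SimpleGraph V} (h : ∀ a b, (G.Reachable a b ↔ H.Reachable a b)) :
    Nat.card G.ConnectedComponent = Nat.card H.ConnectedComponent := by
  refine Nat.card_congr ⟨ccMap (fun a b => (h a b).1), ccMap (fun a b => (h a b).2), ?_, ?_⟩
  · intro c
    induction c using SimpleGraph.ConnectedComponent.ind with
    | _ v => simp
  · intro c
    induction c using SimpleGraph.ConnectedComponent.ind with
    | _ v => simp

lemma reachable_insert {A : Set (Sym2 V)} {x y a b : V}
    (hr : (fromEdgeSet A).Reachable x y)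
    (h : (fromEdgeSet (insert s(x, y) A)).Reachable a b) :
    (fromEdgeSet A).Reachable a b := by
  obtain ⟨w⟩ := h
  induction w with
  | nil => exact Reachable.refl _
  | cons hadj p ih =>
    rw [fromEdgeSet_adj] at hadj
    obtain ⟨hm, hne⟩ := hadj
    rcases Set.mem_insert_iff.mp hm with heq | hA
    · rw [Sym2.eq_iff] at heq
      rcases heq with ⟨rfl, rfl⟩ | ⟨rfl, rfl⟩
      · exact hr.trans ih
      · exact hr.symm.trans ih
    · exact (Adj.reachable (fromEdgeSet_adj A |>.mpr ⟨hA, hne⟩)).trans ih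

lemma numComponents_insert_eq {A : Set (Sym2 V)} {x y : V}
    (hr : (fromEdgeSet A).Reachable x y) :
    numComponents V (insert s(x, y) A) = numComponents V A :=
  card_cc_congr (fun a b =>
    ⟨reachable_insert hr, fun h => h.mono (fromEdgeSet_mono (Set.subset_insert _ _))⟩)

lemma card_ne {α : Type*} [Finite α] (a : α) :
    Nat.card {b : α // b ≠ a} + 1 = Nat.card α := by
  classical
  haveI : Fintype α := Fintype.ofFinite α
  rw [Nat.card_eq_fintype_card, Nat.card_eq_fintype_card,
    ← Fintype.card_congr (Equiv.optionSubtypeNe a), Fintype.card_option]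

lemma numComponents_insert_not_reach [Finite V] {A : Set (Sym2 V)} {x y : V} (hne : x ≠ y)
    (hnr : ¬ (fromEdgeSet A).Reachable x y) :
    numComponents V (insert s(x, y) A) + 1 = numComponents V A := by
  classical
  set GA := fromEdgeSet A with hGA
  set GI := fromEdgeSet (insert s(x, y) A) with hGI
  have hle : GA ≤ GI := fromEdgeSet_mono (Set.subset_insert _ _)
  have hmkxy : GA.connectedComponentMk y ≠ GA.connectedComponentMk x := by
    intro h
    exact hnr (SimpleGraph.ConnectedComponent.exact h).symm
  have hadjxy : GI.Adj x y := by
    rw [hGI, fromEdgeSet_adj]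
    exact ⟨Set.mem_insert _ _, hne⟩
  -- forward map
  have hf : ∀ a b, GI.Adj a b →
      (if h : GA.connectedComponentMk a = GA.connectedComponentMk x
        then (⟨GA.connectedComponentMk y, hmkxy⟩ : {c : GA.ConnectedComponent //
          c ≠ GA.connectedComponentMk x})
        else ⟨GA.connectedComponentMk a, h⟩) =
      (if h : GA.connectedComponentMk b = GA.connectedComponentMk x
        then ⟨GA.connectedComponentMk y, hmkxy⟩
        else ⟨GA.connectedComponentMk b, h⟩) := by
    intro a b hab
    rw [hGI, fromEdgeSet_adj] at hab
    obtain ⟨hm, hneab⟩ := hab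
    rcases Set.mem_insert_iff.mp hm with heq | hA
    · rw [Sym2.eq_iff] at heq
      rcases heq with ⟨rfl, rfl⟩ | ⟨rfl, rfl⟩
      · rw [dif_pos rfl, dif_neg hmkxy]
      · rw [dif_pos rfl, dif_neg hmkxy]
    · have : GA.connectedComponentMk a = GA.connectedComponentMk b :=
        SimpleGraph.ConnectedComponent.sound
          (Adj.reachable (by rw [hGA, fromEdgeSet_adj]; exact ⟨hA, hneab⟩))
      rw [this]
  have key : Nat.card GI.ConnectedComponent =
      Nat.card {c : GA.ConnectedComponent // c ≠ GA.connectedComponentMk x} := by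
    refine Nat.card_congr ⟨ccLiftAdj _ hf, fun z => ccMap (fun a b h => h.mono hle) z.val,
      ?_, ?_⟩
    · intro c
      induction c using SimpleGraph.ConnectedComponent.ind with
      | _ v =>
        simp only [ccLiftAdj_mk]
        by_cases h : GA.connectedComponentMk v = GA.connectedComponentMk x
        · rw [dif_pos h]
          simp only [ccMap_mk]
          refine SimpleGraph.ConnectedComponent.sound ?_
          have h1 : GA.Reachable v x := SimpleGraph.ConnectedComponent.exact h
          exact (Adj.reachable hadjxy.symm).trans ((h1.mono hle).symm)
        · rw [dif_neg h]
          simp only [ccMap_mk]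
    · rintro ⟨c, hc⟩
      induction c using SimpleGraph.ConnectedComponent.ind with
      | _ v =>
        simp only [ccMap_mk, ccLiftAdj_mk]
        exact Subtype.ext (by rw [dif_neg hc])
  have := card_ne (GA.connectedComponentMk x)
  unfold numComponents
  rw [← hGA, ← hGI, key, this]

end Components


section ExtRes
open SimpleGraph

variable {G G' : SimpleGraph V} {x y : V}

/-- extend an orientation of `G'` (which is `G` minus the edge `s(x,y)`) by directing `x → y` -/
def extO (hadj : G.Adj x y)
    (hdel : ∀ a b, G'.Adj a b ↔ (G.Adj a b ∧ s(a, b) ≠ s(x, y)))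
    (O' : GraphOrientation G') : GraphOrientation G where
  dir a b := O'.dir a b ∨ (a = x ∧ b = y)
  adj_of_dir a b h := by
    rcases h with h | ⟨rfl, rfl⟩
    · exact ((hdel a b).1 (O'.adj_of_dir a b h)).1
    · exact hadj
  dir_iff_not a b hab := by
    have hxy : x ≠ y := hadj.ne
    have hndir : ∀ u v : V, s(u, v) = s(x, y) → ¬ O'.dir u v := by
      intro u v huv hd
      exact ((hdel u v).1 (O'.adj_of_dir u v hd)).2 huv
    by_cases he : s(a, b) = s(x, y)
    · rcases Sym2.eq_iff.mp he with ⟨rfl, rfl⟩ | ⟨rfl, rfl⟩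
      · have h1 : ¬ O'.dir b a := hndir b a (Sym2.eq_swap)
        have h2 : ¬ O'.dir a b := hndir a b rfl
        simp [h1, h2, hxy, fun h : b = a => hxy h.symm]
      · have h1 : ¬ O'.dir a b := hndir a b (Sym2.eq_swap)
        have h2 : ¬ O'.dir b a := hndir b a rfl
        simp [h1, h2, hxy, fun h : a = b => hxy h.symm]
    · have hadj' : G'.Adj a b := (hdel a b).2 ⟨hab, he⟩
      have hp1 : ¬ (a = x ∧ b = y) := fun ⟨h1, h2⟩ => he (by rw [h1, h2])
      have hp2 : ¬ (b = x ∧ a = y) := fun ⟨h1, h2⟩ => he (by rw [h1, h2, Sym2.eq_swap])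
      show O'.dir a b ∨ (a = x ∧ b = y) ↔ ¬ (O'.dir b a ∨ (b = x ∧ a = y))
      rw [or_iff_left hp1, or_iff_left hp2]
      exact O'.dir_iff_not a b hadj'

/-- restrict an orientation of `G` to `G'` -/
def resO (hdel : ∀ a b, G'.Adj a b ↔ (G.Adj a b ∧ s(a, b) ≠ s(x, y)))
    (O : GraphOrientation G) : GraphOrientation G' where
  dir a b := O.dir a b ∧ s(a, b) ≠ s(x, y)
  adj_of_dir a b h := (hdel a b).2 ⟨O.adj_of_dir a b h.1, h.2⟩
  dir_iff_not a b hab := by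
    have hne : s(a, b) ≠ s(x, y) := ((hdel a b).1 hab).2
    have hne' : s(b, a) ≠ s(x, y) := by rw [Sym2.eq_swap]; exact hne
    have habG : G.Adj a b := ((hdel a b).1 hab).1
    show (O.dir a b ∧ s(a, b) ≠ s(x, y)) ↔ ¬ (O.dir b a ∧ s(b, a) ≠ s(x, y))
    rw [and_iff_left hne, and_iff_left hne']
    exact O.dir_iff_not a b habG

lemma ext_res (hadj : G.Adj x y)
    (hdel : ∀ a b, G'.Adj a b ↔ (G.Adj a b ∧ s(a, b) ≠ s(x, y)))
    (O : GraphOrientation G) (hO : O.dir x y) :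
    extO hadj hdel (resO hdel O) = O := by
  apply orient_ext
  intro a b
  show (O.dir a b ∧ s(a, b) ≠ s(x, y)) ∨ (a = x ∧ b = y) ↔ O.dir a b
  constructor
  · rintro (⟨h, -⟩ | ⟨rfl, rfl⟩)
    · exact h
    · exact hO
  · intro h
    by_cases he : s(a, b) = s(x, y)
    · rcases Sym2.eq_iff.mp he with ⟨rfl, rfl⟩ | ⟨rfl, rfl⟩
      · exact Or.inr ⟨rfl, rfl⟩
      · exact absurd h ((O.dir_iff_not _ _ hadj).mp hO)
    · exact Or.inl ⟨h, he⟩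

lemma ext_inj (hadj : G.Adj x y)
    (hdel : ∀ a b, G'.Adj a b ↔ (G.Adj a b ∧ s(a, b) ≠ s(x, y)))
    {O₁ O₂ : GraphOrientation G'} (h : extO hadj hdel O₁ = extO hadj hdel O₂) : O₁ = O₂ := by
  apply orient_ext
  intro a b
  have hd : ((O₁.dir a b ∨ (a = x ∧ b = y)) ↔ (O₂.dir a b ∨ (a = x ∧ b = y))) :=
    iff_of_eq (congrFun (congrFun (congrArg GraphOrientation.dir h) a) b)
  by_cases hp : a = x ∧ b = y
  · obtain ⟨rfl, rfl⟩ := hp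
    have h1 : ¬ O₁.dir a b := fun hh => ((hdel a b).1 (O₁.adj_of_dir a b hh)).2 rfl
    have h2 : ¬ O₂.dir a b := fun hh => ((hdel a b).1 (O₂.adj_of_dir a b hh)).2 rfl
    exact iff_of_false h1 h2
  · rw [or_iff_left hp, or_iff_left hp] at hd
    exact hd

end ExtRes


section Counting
open SimpleGraph

variable {G G' : SimpleGraph V} {x y : V} {T : Finset (Sym2 V)}

lemma stp_ext_iff (hadj : G.Adj x y)
    (hdel : ∀ a b, G'.Adj a b ↔ (G.Adj a b ∧ s(a, b) ≠ s(x, y)))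
    (O' : GraphOrientation G') (a b : V) :
    stp (extO hadj hdel O') T a b ↔ stp O' T a b ∨ (a = x ∧ b = y) := by
  show (O'.dir a b ∨ (a = x ∧ b = y)) ∨ s(a, b) ∈ T ↔ (O'.dir a b ∨ s(a, b) ∈ T) ∨ _
  tauto

lemma ext_acyc_iff (hadj : G.Adj x y)
    (hdel : ∀ a b, G'.Adj a b ↔ (G.Adj a b ∧ s(a, b) ≠ s(x, y)))
    (O' : GraphOrientation G') :
    AcycT (extO hadj hdel O') T ↔
      (AcycT O' T ∧ ¬ Relation.ReflTransGen (stp O' T) y x) := by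
  have hmono : ∀ u v, stp O' T u v → stp (extO hadj hdel O') T u v := by
    intro u v h
    exact (stp_ext_iff hadj hdel O' u v).mpr (Or.inl h)
  constructor
  · intro hA
    refine ⟨?_, ?_⟩
    · intro a b hab hba
      exact hA a b (Or.inl hab) (ReflTransGen.mono hmono _ _ hba)
    · intro hr
      exact hA x y (Or.inr ⟨rfl, rfl⟩) (ReflTransGen.mono hmono _ _ hr)
  · rintro ⟨hA, hR⟩ a b hab hba
    rw [rtg_congr (stp_ext_iff hadj hdel O')] at hba
    have hdec := decompOne hR hba
    rcases hab with hab' | ⟨rfl, rfl⟩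
    · rcases hdec with h1 | ⟨h1, h2⟩
      · exact hA a b hab' h1
      · exact hR (h2.trans ((Relation.ReflTransGen.single (show stp O' T a b from Or.inl hab')).trans h1))
    · rcases hdec with h1 | ⟨h1, h2⟩
      · exact hR h1
      · exact hR h1

lemma count_dir (hadj : G.Adj x y)
    (hdel : ∀ a b, G'.Adj a b ↔ (G.Adj a b ∧ s(a, b) ≠ s(x, y)))
    (T : Finset (Sym2 V)) :
    {O : GraphOrientation G | AcycT O T ∧ O.dir x y}.ncard =
      {O' : GraphOrientation G' | AcycT O' T ∧
        ¬ Relation.ReflTransGen (stp O' T) y x}.ncard := by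
  have himg : {O : GraphOrientation G | AcycT O T ∧ O.dir x y} =
      (extO hadj hdel) '' {O' : GraphOrientation G' | AcycT O' T ∧
        ¬ Relation.ReflTransGen (stp O' T) y x} := by
    ext O
    constructor
    · rintro ⟨hA, hd⟩
      refine ⟨resO hdel O, ?_, ext_res hadj hdel O hd⟩
      have hA' : AcycT (extO hadj hdel (resO hdel O)) T := by
        rw [ext_res hadj hdel O hd]; exact hA
      exact (ext_acyc_iff hadj hdel _).1 hA'
    · rintro ⟨O', ⟨hA, hR⟩, rfl⟩
      exact ⟨(ext_acyc_iff hadj hdel O').2 ⟨hA, hR⟩, Or.inr ⟨rfl, rfl⟩⟩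
  rw [himg, Set.ncard_image_of_injOn (fun O₁ _ O₂ _ h => ext_inj hadj hdel h)]

lemma rtg_mem_iff_reachable (A : Finset (Sym2 V)) {u v : V} :
    Relation.ReflTransGen (fun a b => s(a, b) ∈ A) u v ↔
      (fromEdgeSet (↑A : Set (Sym2 V))).Reachable u v := by
  constructor
  · intro h
    induction h with
    | refl => exact Reachable.refl _
    | @tail c d hpc hstep ih =>
      by_cases hcd : c = d
      · subst hcd; exact ih
      · exact ih.trans (Adj.reachable ((fromEdgeSet_adj _).mpr ⟨by simpa using hstep, hcd⟩))
  · intro h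
    rw [reachable_iff_reflTransGen] at h
    refine ReflTransGen.mono ?_ _ _ h
    intro a b hab
    have := (fromEdgeSet_adj _).mp hab
    simpa using this.1

lemma not_both {O' : GraphOrientation G'}
    (hnRT : ¬ Relation.ReflTransGen (fun a b => s(a, b) ∈ T) x y)
    (hA : AcycT O' T) :
    ¬ (Relation.ReflTransGen (stp O' T) x y ∧ Relation.ReflTransGen (stp O' T) y x) := by
  rintro ⟨h1, h2⟩
  rcases extractD (d := O'.dir) (r := fun a b => s(a, b) ∈ T) h1 with hrt | ⟨a, b, ha, hb, hc⟩
  · exact hnRT hrt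
  · exact hA a b hb (hc.trans (h2.trans ha))

lemma acyc_insert_iff {O' : GraphOrientation G'} (hne : x ≠ y)
    (hnRT : ¬ Relation.ReflTransGen (fun a b => s(a, b) ∈ T) x y)
    (hnRT' : ¬ Relation.ReflTransGen (fun a b => s(a, b) ∈ T) y x) [DecidableEq V] :
    AcycT O' (insert s(x, y) T) ↔
      (AcycT O' T ∧ ¬ Relation.ReflTransGen (stp O' T) y x ∧
        ¬ Relation.ReflTransGen (stp O' T) x y) := by
  have hstp2 : ∀ a b, stp O' (insert s(x, y) T) a b ↔
      stp O' T a b ∨ ((a = x ∧ b = y) ∨ (a = y ∧ b = x)) := by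
    intro a b
    show O'.dir a b ∨ s(a, b) ∈ insert s(x, y) T ↔ (O'.dir a b ∨ s(a, b) ∈ T) ∨ _
    rw [Finset.mem_insert]
    have : s(a, b) = s(x, y) ↔ ((a = x ∧ b = y) ∨ (a = y ∧ b = x)) := Sym2.eq_iff
    tauto
  constructor
  · intro hI
    have hmono : ∀ u v, stp O' T u v → stp O' (insert s(x, y) T) u v := by
      intro u v h
      exact (hstp2 u v).mpr (Or.inl h)
    refine ⟨?_, ?_, ?_⟩
    · intro a b hab hba
      exact hI a b hab (ReflTransGen.mono hmono _ _ hba)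
    · intro h
      rcases extractD (d := O'.dir) (r := fun a b => s(a, b) ∈ T) h
        with hrt | ⟨a, b, ha, hb, hc⟩
      · exact hnRT' hrt
      · refine hI a b hb ?_
        have hstep : stp O' (insert s(x, y) T) x y :=
          Or.inr (Finset.mem_insert_self _ _)
        exact ((Relation.ReflTransGen.mono hmono _ _ hc).trans (Relation.ReflTransGen.single hstep)).trans
          (Relation.ReflTransGen.mono hmono _ _ ha)
      -- h : y ⇝ x decomposed as y ⇝ a → b ⇝ x ; cycle b ⇝ x → y ⇝ a with dir a b
    · intro h
      rcases extractD (d := O'.dir) (r := fun a b => s(a, b) ∈ T) h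
        with hrt | ⟨a, b, ha, hb, hc⟩
      · exact hnRT hrt
      · refine hI a b hb ?_
        have hstep : stp O' (insert s(x, y) T) y x := by
          refine Or.inr ?_
          rw [Sym2.eq_swap]
          exact Finset.mem_insert_self _ _
        exact ((Relation.ReflTransGen.mono hmono _ _ hc).trans (Relation.ReflTransGen.single hstep)).trans
          (Relation.ReflTransGen.mono hmono _ _ ha)
  · rintro ⟨hA, hRyx, hRxy⟩ a b hab hba
    rw [rtg_congr hstp2] at hba
    rcases decompTwo hRxy hRyx hba with h1 | ⟨h1, h2⟩ | ⟨h1, h2⟩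
    · exact hA a b hab h1
    · exact hRyx (h2.trans ((Relation.ReflTransGen.single (show stp O' T a b from Or.inl hab)).trans h1))
    · exact hRxy (h2.trans ((Relation.ReflTransGen.single (show stp O' T a b from Or.inl hab)).trans h1))

lemma step_count [Finite V] [DecidableEq V] (hxy : x ≠ y) (hadj : G.Adj x y)
    (hdel : ∀ a b, G'.Adj a b ↔ (G.Adj a b ∧ s(a, b) ≠ s(x, y)))
    (T : Finset (Sym2 V))
    (hnr : ¬ (fromEdgeSet (↑T : Set (Sym2 V))).Reachable x y) :
    {O : GraphOrientation G | AcycT O T}.ncard =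
      {O' : GraphOrientation G' | AcycT O' T}.ncard +
        {O' : GraphOrientation G' | AcycT O' (insert s(x, y) T)}.ncard := by
  have hnRT : ¬ Relation.ReflTransGen (fun a b => s(a, b) ∈ T) x y :=
    fun h => hnr ((rtg_mem_iff_reachable T).1 h)
  have hnRT' : ¬ Relation.ReflTransGen (fun a b => s(a, b) ∈ T) y x :=
    fun h => hnr (((rtg_mem_iff_reachable T).1 h).symm)
  have hdel' : ∀ a b, G'.Adj a b ↔ (G.Adj a b ∧ s(a, b) ≠ s(y, x)) := by
    intro a b
    rw [show s(y, x) = s(x, y) from Sym2.eq_swap]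
    exact hdel a b
  have hsplit : {O : GraphOrientation G | AcycT O T} =
      {O : GraphOrientation G | AcycT O T ∧ O.dir x y} ∪
        {O : GraphOrientation G | AcycT O T ∧ O.dir y x} := by
    ext O
    simp only [Set.mem_setOf_eq, Set.mem_union]
    constructor
    · intro h
      by_cases hd : O.dir x y
      · exact Or.inl ⟨h, hd⟩
      · exact Or.inr ⟨h, (O.dir_iff_not y x hadj.symm).mpr hd⟩
    · rintro (⟨h, -⟩ | ⟨h, -⟩) <;> exact h
  have hdisj : Disjoint {O : GraphOrientation G | AcycT O T ∧ O.dir x y}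
      {O : GraphOrientation G | AcycT O T ∧ O.dir y x} := by
    rw [Set.disjoint_left]
    rintro O ⟨-, h1⟩ ⟨-, h2⟩
    exact (O.dir_iff_not x y hadj).mp h1 h2
  rw [hsplit, Set.ncard_union_eq hdisj (Set.toFinite _) (Set.toFinite _),
    count_dir hadj hdel T, count_dir hadj.symm hdel' T]
  set X := {O' : GraphOrientation G' | AcycT O' T ∧
    ¬ Relation.ReflTransGen (stp O' T) y x} with hX
  set Y := {O' : GraphOrientation G' | AcycT O' T ∧
    ¬ Relation.ReflTransGen (stp O' T) x y} with hY
  have hXY : X ∪ Y = {O' : GraphOrientation G' | AcycT O' T} := by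
    ext O'
    simp only [hX, hY, Set.mem_union, Set.mem_setOf_eq]
    constructor
    · rintro (⟨h, -⟩ | ⟨h, -⟩) <;> exact h
    · intro h
      by_cases hr : Relation.ReflTransGen (stp O' T) y x
      · refine Or.inr ⟨h, fun hr2 => ?_⟩
        exact not_both hnRT h ⟨hr2, hr⟩
      · exact Or.inl ⟨h, hr⟩
  have hI : X ∩ Y = {O' : GraphOrientation G' | AcycT O' (insert s(x, y) T)} := by
    ext O'
    simp only [hX, hY, Set.mem_inter_iff, Set.mem_setOf_eq]
    rw [acyc_insert_iff hxy hnRT hnRT']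
    tauto
  have hsum := Set.ncard_union_add_ncard_inter X Y (Set.toFinite _) (Set.toFinite _)
  rw [hXY, hI] at hsum
  omega

end Counting


section Main
open SimpleGraph

lemma sym2_surj (e : Sym2 V) : ∃ x y, e = s(x, y) :=
  Sym2.ind (fun x y => ⟨x, y, rfl⟩) e

lemma orient_unique {G : SimpleGraph V} (h : ∀ a b, ¬ G.Adj a b) :
    Nat.card (GraphOrientation G) = 1 := by
  have hO : ∀ O : GraphOrientation G, ∀ a b, ¬ O.dir a b :=
    fun O a b hd => h a b (O.adj_of_dir a b hd)
  haveI : Nonempty (GraphOrientation G) :=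
    ⟨⟨fun _ _ => False, fun a b hab => hab.elim, fun a b hab => absurd hab (h a b)⟩⟩
  haveI : Subsingleton (GraphOrientation G) := by
    constructor
    intro O O'
    exact orient_ext (fun a b => iff_of_false (hO O a b) (hO O' a b))
  exact Nat.card_unique

lemma main_count [Fintype V] [DecidableEq V] :
    ∀ (n : ℕ) (E : Finset (Sym2 V)) (G : SimpleGraph V), E.card = n →
      (↑E : Set (Sym2 V)) = G.edgeSet → ∀ T : Finset (Sym2 V),
      ({O : GraphOrientation G | AcycT O T}.ncard : ℤ) =
        ∑ S ∈ E.powerset, (-1 : ℤ) ^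
          (S.card + numComponents V (↑(S ∪ T) : Set (Sym2 V)) +
            numComponents V (↑T : Set (Sym2 V))) := by
  intro n
  induction n using Nat.strong_induction_on with
  | _ n ih =>
  intro E G hc hcoe T
  rcases E.eq_empty_or_nonempty with rfl | ⟨e, he⟩
  · -- base case : no edges
    have hnadj : ∀ a b, ¬ G.Adj a b := by
      intro a b hab
      have h1 : s(a, b) ∈ G.edgeSet := hab
      rw [← hcoe] at h1
      simpa using h1
    have h1 : {O : GraphOrientation G | AcycT O T} = Set.univ := by
      ext O
      simp only [Set.mem_setOf_eq, Set.mem_univ, iff_true]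
      intro a b hab
      exact absurd (O.adj_of_dir a b hab) (hnadj a b)
    rw [h1, Set.ncard_univ, orient_unique hnadj]
    rw [Finset.powerset_empty, Finset.sum_singleton, Finset.card_empty,
      Finset.empty_union, zero_add]
    rw [Even.neg_one_pow ⟨numComponents V (↑T : Set (Sym2 V)), rfl⟩]
    exact Nat.cast_one
  · -- inductive step
    obtain ⟨x, y, rfl⟩ := sym2_surj e
    have hmemE : s(x, y) ∈ G.edgeSet := by rw [← hcoe]; exact_mod_cast he
    have hadjxy : G.Adj x y := (mem_edgeSet G).mp hmemE
    have hxy : x ≠ y := hadjxy.ne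
    set G' := G.deleteEdges {s(x, y)} with hG'
    have hdel : ∀ a b, G'.Adj a b ↔ (G.Adj a b ∧ s(a, b) ≠ s(x, y)) := by
      intro a b
      rw [hG', deleteEdges_adj]
      simp
    have hcoe' : (↑(E.erase s(x, y)) : Set (Sym2 V)) = G'.edgeSet := by
      rw [hG', edgeSet_deleteEdges, ← hcoe, Finset.coe_erase]
    have hne : s(x, y) ∉ E.erase s(x, y) := Finset.notMem_erase _ _
    have hltcard : (E.erase s(x, y)).card < n := by
      rw [← hc]
      exact Finset.card_erase_lt_of_mem he
    have hEid : insert s(x, y) (E.erase s(x, y)) = E := Finset.insert_erase he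
    rw [← hEid, Finset.sum_powerset_insert hne]
    have hterm2 : ∀ S ∈ (E.erase s(x, y)).powerset,
        (-1 : ℤ) ^ ((insert s(x, y) S).card +
            numComponents V (↑(insert s(x, y) S ∪ T) : Set (Sym2 V)) +
            numComponents V (↑T : Set (Sym2 V))) =
        (-1 : ℤ) ^ (S.card + 1 +
            numComponents V (↑(S ∪ insert s(x, y) T) : Set (Sym2 V)) +
            numComponents V (↑T : Set (Sym2 V))) := by
      intro S hS
      have heS : s(x, y) ∉ S :=
        fun h => hne (Finset.mem_powerset.mp hS h)
      rw [Finset.card_insert_of_notMem heS, Finset.insert_union, ← Finset.union_insert]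
    by_cases hreach : (fromEdgeSet (↑T : Set (Sym2 V))).Reachable x y
    · -- T already connects x and y : both sides vanish
      have hLHS : {O : GraphOrientation G | AcycT O T} = ∅ := by
        ext O
        simp only [Set.mem_setOf_eq, Set.mem_empty_iff_false, iff_false]
        intro hA
        have hrt : ∀ u v : V, (fromEdgeSet (↑T : Set (Sym2 V))).Reachable u v →
            Relation.ReflTransGen (stp O T) u v := by
          intro u v h
          exact Relation.ReflTransGen.mono (fun a b hab => Or.inr hab) _ _ ((rtg_mem_iff_reachable T).2 h)
        by_cases hd : O.dir x y
        · exact hA x y hd (hrt y x hreach.symm)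
        · exact hA y x ((O.dir_iff_not y x hadjxy.symm).mpr hd) (hrt x y hreach)
      rw [hLHS, Set.ncard_empty, Finset.sum_congr rfl hterm2, ← Finset.sum_add_distrib,
        Nat.cast_zero]
      symm
      apply Finset.sum_eq_zero
      intro S hS
      have hrS : (fromEdgeSet (↑(S ∪ T) : Set (Sym2 V))).Reachable x y := by
        refine hreach.mono (fromEdgeSet_mono ?_)
        intro z hz
        simp only [Finset.coe_union, Set.mem_union]
        exact Or.inr hz
      have hN : numComponents V (↑(S ∪ insert s(x, y) T) : Set (Sym2 V)) =
          numComponents V (↑(S ∪ T) : Set (Sym2 V)) := by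
        rw [Finset.union_insert, Finset.coe_insert]
        exact numComponents_insert_eq hrS
      rw [hN, show S.card + 1 + numComponents V (↑(S ∪ T) : Set (Sym2 V)) +
          numComponents V (↑T : Set (Sym2 V)) =
          (S.card + numComponents V (↑(S ∪ T) : Set (Sym2 V)) +
          numComponents V (↑T : Set (Sym2 V))) + 1 from by ring, pow_succ]
      ring
    · -- x and y in different T-components
      have hstep := step_count hxy hadjxy hdel T hreach
      have hNT : numComponents V (↑(insert s(x, y) T) : Set (Sym2 V)) + 1 =
          numComponents V (↑T : Set (Sym2 V)) := by
        rw [Finset.coe_insert]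
        exact numComponents_insert_not_reach hxy hreach
      have hterm3 : ∀ S ∈ (E.erase s(x, y)).powerset,
          (-1 : ℤ) ^ (S.card + 1 +
              numComponents V (↑(S ∪ insert s(x, y) T) : Set (Sym2 V)) +
              numComponents V (↑T : Set (Sym2 V))) =
          (-1 : ℤ) ^ (S.card +
              numComponents V (↑(S ∪ insert s(x, y) T) : Set (Sym2 V)) +
              numComponents V (↑(insert s(x, y) T) : Set (Sym2 V))) := by
        intro S hS
        rw [show S.card + 1 + numComponents V (↑(S ∪ insert s(x, y) T) : Set (Sym2 V)) +
            numComponents V (↑T : Set (Sym2 V)) =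
            (S.card + numComponents V (↑(S ∪ insert s(x, y) T) : Set (Sym2 V)) +
            numComponents V (↑(insert s(x, y) T) : Set (Sym2 V))) + 2 from by omega]
        rw [pow_add]
        norm_num
      rw [Finset.sum_congr rfl hterm2, Finset.sum_congr rfl hterm3]
      rw [← ih _ hltcard _ G' rfl hcoe' T, ← ih _ hltcard _ G' rfl hcoe' (insert s(x, y) T)]
      rw [hstep]
      push_cast
      ring

end Main


section Final
open SimpleGraph

lemma numComponents_empty [Fintype V] :
    numComponents V (↑(∅ : Finset (Sym2 V)) : Set (Sym2 V)) = Fintype.card V := by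
  rw [Finset.coe_empty]
  unfold numComponents
  rw [fromEdgeSet_empty]
  rw [← Nat.card_eq_fintype_card]
  refine Nat.card_congr ⟨ccLiftAdj id (fun a b h => absurd h (by simp)),
    (⊥ : SimpleGraph V).connectedComponentMk, ?_, ?_⟩
  · intro c
    induction c using SimpleGraph.ConnectedComponent.ind with
    | _ v => simp
  · intro v
    simp

lemma neg_one_zpow_cast (a b n : ℕ) :
    (((-1 : ℤˣ) ^ ((a : ℤ) + (b : ℤ) - (n : ℤ)) : ℤˣ) : ℤ) = (-1 : ℤ) ^ (a + b + n) := by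
  have hiff : Even ((a : ℤ) + b - n) ↔ Even (a + b + n) := by
    rw [Int.even_iff, Nat.even_iff]
    omega
  have h2 : ((-1 : ℤˣ)) ^ (2 : ℤ) = 1 := by decide
  by_cases hp : Even ((a : ℤ) + b - n)
  · rw [hp.neg_one_zpow, Even.neg_one_pow (hiff.mp hp)]
    simp
  · rw [Int.not_even_iff_odd] at hp
    have hodd : Odd (a + b + n) := by
      rw [Nat.odd_iff]
      rw [Int.odd_iff] at hp
      omega
    obtain ⟨k, hk⟩ := hp
    rw [hk, zpow_add, zpow_mul, h2, one_zpow, one_mul, hodd.neg_one_pow]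
    simp

end Final
end St16

theorem statement16 {V : Type*} [Fintype V] [DecidableEq V] (G : SimpleGraph V)
    [DecidableRel G.Adj] (hG : G.Connected) :
    ({O : GraphOrientation G | ¬ ∃ C : Set (Sym2 V), O.IsDirCycle C}.ncard : ℤ) =
      ∑ S ∈ G.edgeFinset.powerset,
        ((((-1 : ℤˣ) ^ ((S.card : ℤ) + (numComponents V (↑S : Set (Sym2 V)) : ℤ)
          - (Fintype.card V : ℤ)) : ℤˣ)) : ℤ) := by
  classical
  have hset : {O : GraphOrientation G | ¬ ∃ C : Set (Sym2 V), O.IsDirCycle C} =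
      {O : GraphOrientation G | St16.AcycT O (∅ : Finset (Sym2 V))} := by
    ext O
    rw [Set.mem_setOf_eq, Set.mem_setOf_eq, St16.no_dircycle_iff O]
    constructor <;> intro h a b hd hr <;> apply h a b hd
    · refine Relation.ReflTransGen.mono ?_ _ _ hr
      rintro u v (hu | hu)
      · exact hu
      · simp at hu
    · exact Relation.ReflTransGen.mono (fun u v hu => Or.inl hu) _ _ hr
  rw [hset, St16.main_count G.edgeFinset.card G.edgeFinset G rfl (SimpleGraph.coe_edgeFinset G) ∅]
  apply Finset.sum_congr rfl
  intro S hS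
  rw [Finset.union_empty, St16.numComponents_empty]
  exact (St16.neg_one_zpow_cast S.card (numComponents V (↑S : Set (Sym2 V)))
    (Fintype.card V)).symm
end

section
/- Let G = (V,E) be a finite connected simple graph. The number of strongly connected orientations of G equals Σ_{S ⊆ E} (−1)^{c(S) − 1}, where c(S) is the number of connected components of the spanning subgraph (V,S). (This sum is the Tutte polynomial evaluation T_G(0,2) via the subgraph expansion.) -/
open Finset
set_option maxHeartbeats 1000000
set_option linter.unusedSectionVars false
set_option linter.unusedVariables false


attribute [local instance] Classical.propDecidable

namespace TutteSC
variable {V : Type*} [Fintype V] [DecidableEq V]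

def prel (R : Finset (V × V)) (a b : V) : Prop := (a, b) ∈ R
def PReach (R : Finset (V × V)) (a b : V) : Prop := Relation.ReflTransGen (prel R) a b
def Sym (R : Finset (V × V)) (a b : V) : Prop := PReach R a b ∧ PReach R b a
lemma Sym.refl (R : Finset (V × V)) (a : V) : Sym R a a := ⟨.refl, .refl⟩
lemma Sym.symm' {R : Finset (V × V)} {a b : V} (h : Sym R a b) : Sym R b a := ⟨h.2, h.1⟩
lemma Sym.trans' {R : Finset (V × V)} {a b c : V} (h : Sym R a b) (h' : Sym R b c) :
    Sym R a c := ⟨h.1.trans h'.1, h'.2.trans h.2⟩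
def Good (R : Finset (V × V)) : Prop := ∀ p ∈ R, Sym R p.1 p.2
noncomputable def cls (R : Finset (V × V)) (a : V) : Finset V := univ.filter (Sym R a)
noncomputable def kk (R : Finset (V × V)) : ℕ := (univ.image (cls R)).card
lemma mem_cls {R : Finset (V × V)} {a b : V} : b ∈ cls R a ↔ Sym R a b := by simp [cls]
lemma preach_insert {R : Finset (V × V)} {x y u v : V} :
    PReach (insert (x, y) R) u v ↔ PReach R u v ∨ (PReach R u x ∧ PReach R y v) := by
  constructor
  · intro h
    induction h with
    | refl => exact Or.inl .refl
    | tail _ hstep ih =>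
      rename_i b c _
      rcases Finset.mem_insert.1 hstep with he | hR
      · have hb : b = x := congrArg Prod.fst he
        have hc : c = y := congrArg Prod.snd he
        subst hb; subst hc
        rcases ih with h1 | ⟨h1, _⟩
        · exact Or.inr ⟨h1, .refl⟩
        · exact Or.inr ⟨h1, .refl⟩
      · rcases ih with h1 | ⟨h1, h2⟩
        · exact Or.inl (h1.tail hR)
        · exact Or.inr ⟨h1, h2.tail hR⟩
  · rintro (h | ⟨h1, h2⟩)
    · exact Relation.ReflTransGen.mono (fun a b hab => Finset.mem_insert_of_mem hab) _ _ h
    · have hx : PReach (insert (x,y) R) u x :=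
        Relation.ReflTransGen.mono (fun a b hab => Finset.mem_insert_of_mem hab) _ _ h1
      have hy : PReach (insert (x,y) R) y v :=
        Relation.ReflTransGen.mono (fun a b hab => Finset.mem_insert_of_mem hab) _ _ h2
      exact (hx.tail (Finset.mem_insert_self _ _)).trans hy
lemma preach_mono {R R' : Finset (V × V)} (h : R ⊆ R') {u v : V} (hr : PReach R u v) :
    PReach R' u v := Relation.ReflTransGen.mono (fun a b hab => h hab) _ _ hr
lemma good_preach_sym {R : Finset (V × V)} (hg : Good R) {u v : V} (h : PReach R u v) :
    Sym R u v := by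
  induction h with
  | refl => exact Sym.refl R u
  | tail _ hstep ih => exact ih.trans' (hg _ hstep)
lemma preach_step {R : Finset (V × V)} {a b : V} (h : (a, b) ∈ R) : PReach R a b :=
  Relation.ReflTransGen.single h

/-- predicted value -/
noncomputable def P (R : Finset (V × V)) : ℤ := if Good R then (-1) ^ (kk R - 1) else 0

lemma preach_insert_of_reach {R : Finset (V × V)} {x y : V} (hxy : PReach R x y) {u v : V} :
    PReach (insert (x, y) R) u v ↔ PReach R u v := by
  rw [preach_insert]
  exact ⟨fun h => h.elim id (fun ⟨h1, h2⟩ => (h1.trans hxy).trans h2), Or.inl⟩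

lemma sym_insert_of_reach {R : Finset (V × V)} {x y : V} (hxy : PReach R x y) {u v : V} :
    Sym (insert (x, y) R) u v ↔ Sym R u v := by
  unfold Sym; rw [preach_insert_of_reach hxy, preach_insert_of_reach hxy]

lemma kk_congr {R R' : Finset (V × V)} (h : ∀ u v, Sym R' u v ↔ Sym R u v) : kk R' = kk R := by
  unfold kk
  congr 1
  apply Finset.image_congr
  intro a _
  ext c; simp only [mem_cls, h]

lemma good_insert_iff {R : Finset (V × V)} {x y : V}
    (hsym : ∀ u v, Sym (insert (x,y) R) u v ↔ Sym R u v) :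
    Good (insert (x, y) R) ↔ Good R ∧ Sym R x y := by
  constructor
  · intro hg
    constructor
    · intro p hp
      exact (hsym p.1 p.2).1 (hg p (Finset.mem_insert_of_mem hp))
    · exact (hsym x y).1 (hg (x,y) (Finset.mem_insert_self _ _))
  · rintro ⟨hg, hxy⟩ p hp
    rcases Finset.mem_insert.1 hp with he | hR
    · have : p = (x,y) := he
      rw [this]
      exact (hsym x y).2 hxy
    · exact (hsym p.1 p.2).2 (hg p hR)

/-- Case: x reaches y already (single insert keeps P) -/
lemma P_insert_of_reach_of_sym {R : Finset (V × V)} {x y : V} (hxy : PReach R x y)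
    (hyx : PReach R y x) : P (insert (x, y) R) = P R := by
  have hsym : ∀ u v, Sym (insert (x,y) R) u v ↔ Sym R u v := fun u v => sym_insert_of_reach hxy
  unfold P
  rw [kk_congr hsym, good_insert_iff hsym]
  by_cases hg : Good R
  · simp [hg, hxy, hyx, Sym]
  · simp [hg]

lemma P_zero_of_bad {R : Finset (V × V)} {a b : V} (hab : (a, b) ∈ R) (h : ¬ PReach R b a) :
    P R = 0 := by
  unfold P
  have : ¬ Good R := fun hg => h (hg (a,b) hab).2
  simp [this]

-- double insert reachability
lemma preach_insert2 {R : Finset (V × V)} {x y u v : V} :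
    PReach (insert (x,y) (insert (y,x) R)) u v ↔
      PReach R u v ∨ ((PReach R u x ∨ PReach R u y) ∧ (PReach R x v ∨ PReach R y v)) := by
  rw [preach_insert, preach_insert, preach_insert, preach_insert]
  constructor
  · rintro ((h | ⟨h1, h2⟩) | ⟨(h1 | ⟨h1, h2⟩), (h3 | ⟨h3, h4⟩)⟩)
    · exact Or.inl h
    · exact Or.inr ⟨Or.inr h1, Or.inl h2⟩
    · exact Or.inr ⟨Or.inl h1, Or.inr h3⟩
    · exact Or.inr ⟨Or.inl h1, Or.inl h4⟩
    · exact Or.inr ⟨Or.inr h1, Or.inr h3⟩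
    · exact Or.inr ⟨Or.inr h1, Or.inl h4⟩
  · rintro (h | ⟨(h1 | h1), (h2 | h2)⟩)
    · exact Or.inl (Or.inl h)
    · exact Or.inr ⟨Or.inl h1, Or.inr ⟨.refl, h2⟩⟩
    · exact Or.inr ⟨Or.inl h1, Or.inl h2⟩
    · exact Or.inl (Or.inr ⟨h1, h2⟩)
    · exact Or.inr ⟨Or.inr ⟨h1, .refl⟩, Or.inl h2⟩

lemma good_reach_iff_sym {R : Finset (V × V)} (hg : Good R) {u v : V} :
    PReach R u v ↔ Sym R u v := ⟨good_preach_sym hg, fun h => h.1⟩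

lemma sym_insert2_good {R : Finset (V × V)} (hg : Good R) {x y u v : V} :
    Sym (insert (x,y) (insert (y,x) R)) u v ↔
      Sym R u v ∨ ((Sym R u x ∨ Sym R u y) ∧ (Sym R v x ∨ Sym R v y)) := by
  constructor
  · rintro ⟨h1, h2⟩
    rw [preach_insert2] at h1 h2
    rcases h1 with h | ⟨hu, hv⟩
    · exact Or.inl (good_preach_sym hg h)
    · refine Or.inr ⟨?_, ?_⟩
      · rcases hu with h | h
        · exact Or.inl (good_preach_sym hg h)
        · exact Or.inr (good_preach_sym hg h)
      · rcases hv with h | h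
        · exact Or.inl (good_preach_sym hg h).symm'
        · exact Or.inr (good_preach_sym hg h).symm'
  · rintro (h | ⟨h1, h2⟩)
    · exact ⟨preach_insert2.2 (Or.inl h.1), preach_insert2.2 (Or.inl h.2)⟩
    · refine ⟨preach_insert2.2 (Or.inr ⟨?_, ?_⟩), preach_insert2.2 (Or.inr ⟨?_, ?_⟩)⟩
      · rcases h1 with h | h
        · exact Or.inl h.1
        · exact Or.inr h.1
      · rcases h2 with h | h
        · exact Or.inl h.2
        · exact Or.inr h.2
      · rcases h2 with h | h
        · exact Or.inl h.1
        · exact Or.inr h.1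
      · rcases h1 with h | h
        · exact Or.inl h.2
        · exact Or.inr h.2

lemma cls_insert2_good {R : Finset (V × V)} (hg : Good R) {x y u : V} :
    cls (insert (x,y) (insert (y,x) R)) u =
      if Sym R u x ∨ Sym R u y then cls R x ∪ cls R y else cls R u := by
  by_cases h : Sym R u x ∨ Sym R u y
  · rw [if_pos h]
    ext c
    simp only [mem_cls, sym_insert2_good hg, Finset.mem_union]
    constructor
    · rintro (hc | ⟨_, hc⟩)
      · rcases h with h | h
        · exact Or.inl (h.symm'.trans' hc)
        · exact Or.inr (h.symm'.trans' hc)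
      · rcases hc with hc | hc
        · exact Or.inl hc.symm'
        · exact Or.inr hc.symm'
    · intro hc
      refine Or.inr ⟨h, ?_⟩
      rcases hc with hc | hc
      · exact Or.inl hc.symm'
      · exact Or.inr hc.symm'
  · rw [if_neg h]
    ext c
    simp only [mem_cls, sym_insert2_good hg]
    constructor
    · rintro (hc | ⟨h1, _⟩)
      · exact hc
      · exact absurd h1 h
    · exact Or.inl

lemma cls_eq_of_sym {R : Finset (V × V)} {a b : V} (h : Sym R a b) : cls R a = cls R b := by
  ext c; simp only [mem_cls]
  exact ⟨fun h' => (h.symm').trans' h', fun h' => h.trans' h'⟩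
lemma sym_of_cls_eq {R : Finset (V × V)} {a b : V} (h : cls R a = cls R b) : Sym R a b := by
  have : b ∈ cls R b := mem_cls.2 (Sym.refl R b)
  rw [← h] at this; exact mem_cls.1 this

lemma kk_insert2_good {R : Finset (V × V)} {x y : V} (hg : Good R) (hns : ¬ Sym R x y) :
    kk (insert (x,y) (insert (y,x) R)) + 1 = kk R ∧ 2 ≤ kk R := by
  classical
  have hcxA : cls R x ∈ univ.image (cls R) := Finset.mem_image_of_mem _ (mem_univ x)
  have hcyA : cls R y ∈ univ.image (cls R) := Finset.mem_image_of_mem _ (mem_univ y)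
  have hxy : cls R x ≠ cls R y := fun h => hns (sym_of_cls_eq h)
  have himg : univ.image (cls (insert (x,y) (insert (y,x) R))) =
      insert (cls R x ∪ cls R y) (((univ.image (cls R)).erase (cls R x)).erase (cls R y)) := by
    ext D
    simp only [Finset.mem_image, Finset.mem_insert, Finset.mem_erase]
    constructor
    · rintro ⟨u, -, rfl⟩
      rw [cls_insert2_good hg]
      by_cases h : Sym R u x ∨ Sym R u y
      · rw [if_pos h]; exact Or.inl rfl
      · rw [if_neg h]
        push_neg at h
        refine Or.inr ⟨fun hc => h.2 (sym_of_cls_eq hc), fun hc => h.1 (sym_of_cls_eq hc),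
          ⟨u, mem_univ u, rfl⟩⟩
    · rintro (rfl | ⟨hne2, hne1, u, -, rfl⟩)
      · refine ⟨x, mem_univ x, ?_⟩
        rw [cls_insert2_good hg, if_pos (Or.inl (Sym.refl R x))]
      · refine ⟨u, mem_univ u, ?_⟩
        rw [cls_insert2_good hg, if_neg ?_]
        rintro (h | h)
        · exact hne1 (cls_eq_of_sym h)
        · exact hne2 (cls_eq_of_sym h)
  have hnotin : cls R x ∪ cls R y ∉ ((univ.image (cls R)).erase (cls R x)).erase (cls R y) := by
    intro hmem
    have h1 := Finset.mem_of_mem_erase (Finset.mem_of_mem_erase hmem)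
    obtain ⟨u, -, hu⟩ := Finset.mem_image.1 h1
    have hu1 : u ∈ cls R u := mem_cls.2 (Sym.refl R u)
    rw [hu] at hu1
    rcases Finset.mem_union.1 hu1 with h | h
    · have : cls R u = cls R x := cls_eq_of_sym (mem_cls.1 h).symm'
      rw [hu] at this
      exact (Finset.ne_of_mem_erase (Finset.mem_of_mem_erase hmem)) this
    · have : cls R u = cls R y := cls_eq_of_sym (mem_cls.1 h).symm'
      rw [hu] at this
      exact (Finset.ne_of_mem_erase hmem) this
  have hcyA' : cls R y ∈ (univ.image (cls R)).erase (cls R x) := Finset.mem_erase.2 ⟨fun h => hxy h.symm, hcyA⟩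
  have hcard2 : 2 ≤ (univ.image (cls R)).card := Finset.one_lt_card.2 ⟨_, hcxA, _, hcyA, hxy⟩
  constructor
  · unfold kk
    rw [himg, Finset.card_insert_of_notMem hnotin, Finset.card_erase_of_mem hcyA',
      Finset.card_erase_of_mem hcxA]
    omega
  · exact hcard2

lemma good_insert2 {R : Finset (V × V)} {x y : V} (hg : Good R) :
    Good (insert (x,y) (insert (y,x) R)) := by
  intro p hp
  have hsxy : Sym (insert (x,y) (insert (y,x) R)) x y := by
    constructor
    · exact preach_step (Finset.mem_insert_self _ _)
    · exact preach_step (Finset.mem_insert_of_mem (Finset.mem_insert_self _ _))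
  rcases Finset.mem_insert.1 hp with rfl | hp
  · exact hsxy
  rcases Finset.mem_insert.1 hp with rfl | hp
  · exact hsxy.symm'
  · have := hg p hp
    exact ⟨preach_mono (fun q hq => by simp [Finset.mem_insert, hq]) this.1,
      preach_mono (fun q hq => by simp [Finset.mem_insert, hq]) this.2⟩

/-- the main recursion for the predicted value -/
lemma P_rec (R : Finset (V × V)) (x y : V) :
    P R = P (insert (x,y) R) + P (insert (y,x) R)
      - P (insert (x,y) (insert (y,x) R)) := by
  by_cases hxy : PReach R x y <;> by_cases hyx : PReach R y x
  · -- both reach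
    have h1 : P (insert (x,y) R) = P R := P_insert_of_reach_of_sym hxy hyx
    have h2 : P (insert (y,x) R) = P R := P_insert_of_reach_of_sym hyx hxy
    have h3 : P (insert (x,y) (insert (y,x) R)) = P R := by
      have e1 : PReach (insert (y,x) R) x y := preach_mono (Finset.subset_insert _ _) hxy
      have e2 : PReach (insert (y,x) R) y x := preach_mono (Finset.subset_insert _ _) hyx
      rw [P_insert_of_reach_of_sym e1 e2, P_insert_of_reach_of_sym hyx hxy]
    rw [h1, h2, h3]; ring
  · -- x⇝y, ¬y⇝x
    have h0 : P R = 0 := by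
      have : ¬ Good R := fun hg => hyx (good_preach_sym hg hxy).2
      simp [P, this]
    have h1 : P (insert (x,y) R) = 0 := by
      refine P_zero_of_bad (Finset.mem_insert_self _ _) ?_
      rw [preach_insert]
      rintro (h | ⟨h, -⟩) <;> exact hyx h
    have h3 : P (insert (x,y) (insert (y,x) R)) = P (insert (y,x) R) := by
      have e1 : PReach (insert (y,x) R) x y := preach_mono (Finset.subset_insert _ _) hxy
      have e2 : PReach (insert (y,x) R) y x := preach_step (Finset.mem_insert_self _ _)
      exact P_insert_of_reach_of_sym e1 e2
    rw [h0, h1, h3]; ring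
  · -- ¬x⇝y, y⇝x : mirror
    have h0 : P R = 0 := by
      have : ¬ Good R := fun hg => hxy (good_preach_sym hg hyx).2
      simp [P, this]
    have h1 : P (insert (y,x) R) = 0 := by
      refine P_zero_of_bad (Finset.mem_insert_self _ _) ?_
      rw [preach_insert]
      rintro (h | ⟨h, -⟩) <;> exact hxy h
    have h3 : P (insert (x,y) (insert (y,x) R)) = P (insert (x,y) R) := by
      rw [Finset.insert_comm]
      have e1 : PReach (insert (x,y) R) y x := preach_mono (Finset.subset_insert _ _) hyx
      have e2 : PReach (insert (x,y) R) x y := preach_step (Finset.mem_insert_self _ _)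
      exact P_insert_of_reach_of_sym e1 e2
    rw [h0, h1, h3]; ring
  · -- neither reaches
    have h1 : P (insert (x,y) R) = 0 := by
      refine P_zero_of_bad (Finset.mem_insert_self _ _) ?_
      rw [preach_insert]
      rintro (h | ⟨h, -⟩) <;> exact hyx h
    have h2 : P (insert (y,x) R) = 0 := by
      refine P_zero_of_bad (Finset.mem_insert_self _ _) ?_
      rw [preach_insert]
      rintro (h | ⟨h, -⟩) <;> exact hxy h
    by_cases hg : Good R
    · have hns : ¬ Sym R x y := fun h => hxy h.1
      obtain ⟨hk, hk2⟩ := kk_insert2_good hg hns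
      have hg2 := good_insert2 (x := x) (y := y) hg
      have h3 : P (insert (x,y) (insert (y,x) R)) = (-1) ^ (kk (insert (x,y) (insert (y,x) R)) - 1) := by
        simp [P, hg2]
      have h4 : P R = (-1) ^ (kk R - 1) := by simp [P, hg]
      obtain ⟨m, hm⟩ : ∃ m, kk R = m + 2 := ⟨kk R - 2, by omega⟩
      have hkk' : kk (insert (x,y) (insert (y,x) R)) = m + 1 := by omega
      rw [h1, h2, h3, h4, hkk', hm]
      have : m + 2 - 1 = (m + 1 - 1) + 1 := by omega
      rw [this]
      rw [pow_succ]
      ring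
    · have h4 : P R = 0 := by simp [P, hg]
      have h3 : P (insert (x,y) (insert (y,x) R)) = 0 := by
        unfold Good at hg
        push_neg at hg
        obtain ⟨⟨a, b⟩, hab, hnab⟩ := hg
        have hreach : PReach R a b := preach_step hab
        have hnba : ¬ PReach R b a := fun h => hnab ⟨hreach, h⟩
        refine P_zero_of_bad (R := insert (x,y) (insert (y,x) R)) (a := a) (b := b) ?_ ?_
        · exact Finset.mem_insert_of_mem (Finset.mem_insert_of_mem hab)
        · rw [preach_insert2]
          rintro (h | ⟨(h1 | h1), (h2 | h2)⟩)
          · exact hnba h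
          · exact hnba (h1.trans h2)
          · exact hyx ((h2.trans hreach).trans h1)
          · exact hxy ((h2.trans hreach).trans h1)
          · exact hnba (h1.trans h2)
      rw [h1, h2, h3, h4]; ring


/-! ## The master counting identity -/

variable {G : SimpleGraph V}

def confl (G : SimpleGraph V) (X Y : Finset V) : Prop :=
  ∃ a b, G.Adj a b ∧ a ∈ X ∧ a ∉ Y ∧ b ∈ Y ∧ b ∉ X

def consis (G : SimpleGraph V) (F : Finset (Finset V)) : Prop :=
  ∀ X ∈ F, ∀ Y ∈ F, ¬ confl G X Y

def Cl (R : Finset (V × V)) (U : Finset V) : Prop := ∀ p ∈ R, p.1 ∈ U → p.2 ∈ U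

noncomputable def grnd (R : Finset (V × V)) : Finset (Finset V) :=
  univ.powerset.filter (fun U => U.Nonempty ∧ U ≠ univ ∧ Cl R U)

noncomputable def Msum (G : SimpleGraph V) (R : Finset (V × V)) : ℤ :=
  ∑ F ∈ (grnd R).powerset.filter (consis G), (-1 : ℤ) ^ F.card

lemma mem_grnd {R : Finset (V × V)} {U : Finset V} :
    U ∈ grnd R ↔ U.Nonempty ∧ U ≠ univ ∧ Cl R U := by
  simp [grnd]

lemma mem_grnd_insert {R : Finset (V × V)} {x y : V} {U : Finset V} :
    U ∈ grnd (insert (x,y) R) ↔ U ∈ grnd R ∧ (x ∈ U → y ∈ U) := by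
  simp only [mem_grnd]
  constructor
  · rintro ⟨h1, h2, h3⟩
    exact ⟨⟨h1, h2, fun p hp => h3 p (Finset.mem_insert_of_mem hp)⟩,
      h3 (x,y) (Finset.mem_insert_self _ _)⟩
  · rintro ⟨⟨h1, h2, h3⟩, h4⟩
    refine ⟨h1, h2, fun p hp => ?_⟩
    rcases Finset.mem_insert.1 hp with rfl | hp
    · exact h4
    · exact h3 p hp

lemma Cl_preach {R : Finset (V × V)} {U : Finset V} (hU : Cl R U) {a b : V}
    (h : PReach R a b) (ha : a ∈ U) : b ∈ U := by
  induction h with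
  | refl => exact ha
  | tail _ hstep ih => exact hU _ hstep ih

/-- the deletion/insertion recursion for Msum -/
lemma Msum_rec {x y : V} (hadj : G.Adj x y) (R : Finset (V × V)) :
    Msum G R = Msum G (insert (x,y) R) + Msum G (insert (y,x) R)
      - Msum G (insert (x,y) (insert (y,x) R)) := by
  classical
  set A := (grnd R).powerset.filter (consis G) with hA
  set q1 : Finset (Finset V) → Prop := fun F => ∃ X ∈ F, x ∈ X ∧ y ∉ X with hq1
  set q2 : Finset (Finset V) → Prop := fun F => ∃ X ∈ F, y ∈ X ∧ x ∉ X with hq2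
  have hq12 : ∀ F ∈ A, q1 F → ¬ q2 F := by
    rintro F hF ⟨X, hX, hx1, hy1⟩ ⟨Y, hY, hy2, hx2⟩
    have hcons : consis G F := (Finset.mem_filter.1 hF).2
    exact hcons X hX Y hY ⟨x, y, hadj, hx1, hx2, hy2, hy1⟩
  have e1 : A.filter (fun F => ¬ q1 F) = (grnd (insert (x,y) R)).powerset.filter (consis G) := by
    ext F
    simp only [hA, Finset.mem_filter, Finset.mem_powerset, hq1, not_exists]
    constructor
    · rintro ⟨⟨hsub, hcons⟩, hnq⟩
      refine ⟨fun X hX => mem_grnd_insert.2 ⟨hsub hX, fun hx => ?_⟩, hcons⟩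
      by_contra hy
      exact hnq X ⟨hX, hx, hy⟩
    · rintro ⟨hsub, hcons⟩
      refine ⟨⟨fun X hX => (mem_grnd_insert.1 (hsub hX)).1, hcons⟩, ?_⟩
      rintro X ⟨hX, hx, hy⟩
      exact hy ((mem_grnd_insert.1 (hsub hX)).2 hx)
  have e2 : A.filter (fun F => ¬ q2 F) = (grnd (insert (y,x) R)).powerset.filter (consis G) := by
    ext F
    simp only [hA, Finset.mem_filter, Finset.mem_powerset, hq2, not_exists]
    constructor
    · rintro ⟨⟨hsub, hcons⟩, hnq⟩
      refine ⟨fun X hX => mem_grnd_insert.2 ⟨hsub hX, fun hx => ?_⟩, hcons⟩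
      by_contra hy
      exact hnq X ⟨hX, hx, hy⟩
    · rintro ⟨hsub, hcons⟩
      refine ⟨⟨fun X hX => (mem_grnd_insert.1 (hsub hX)).1, hcons⟩, ?_⟩
      rintro X ⟨hX, hx, hy⟩
      exact hy ((mem_grnd_insert.1 (hsub hX)).2 hx)
  have e3 : (A.filter (fun F => ¬ q2 F)).filter (fun F => ¬ q1 F) =
      (grnd (insert (x,y) (insert (y,x) R))).powerset.filter (consis G) := by
    ext F
    simp only [hA, Finset.mem_filter, Finset.mem_powerset, hq1, hq2, not_exists]
    constructor
    · rintro ⟨⟨⟨hsub, hcons⟩, hnq2⟩, hnq1⟩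
      refine ⟨fun X hX => mem_grnd_insert.2 ⟨mem_grnd_insert.2 ⟨hsub hX, fun hy => ?_⟩,
        fun hx => ?_⟩, hcons⟩
      · by_contra hx
        exact hnq2 X ⟨hX, hy, hx⟩
      · by_contra hy
        exact hnq1 X ⟨hX, hx, hy⟩
    · rintro ⟨hsub, hcons⟩
      have h1 : ∀ X ∈ F, X ∈ grnd R ∧ (y ∈ X → x ∈ X) ∧ (x ∈ X → y ∈ X) := by
        intro X hX
        have := mem_grnd_insert.1 (hsub hX)
        exact ⟨(mem_grnd_insert.1 this.1).1, (mem_grnd_insert.1 this.1).2, this.2⟩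
      refine ⟨⟨⟨fun X hX => (h1 X hX).1, hcons⟩, ?_⟩, ?_⟩
      · rintro X ⟨hX, hy, hx⟩
        exact hx ((h1 X hX).2.1 hy)
      · rintro X ⟨hX, hx, hy⟩
        exact hy ((h1 X hX).2.2 hx)
  have efil : A.filter q1 = (A.filter (fun F => ¬ q2 F)).filter q1 := by
    ext F
    simp only [Finset.mem_filter]
    constructor
    · rintro ⟨hFA, hq⟩
      exact ⟨⟨hFA, hq12 F hFA hq⟩, hq⟩
    · rintro ⟨⟨hFA, _⟩, hq⟩
      exact ⟨hFA, hq⟩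
  have s1 : Msum G R = ∑ F ∈ A.filter q1, (-1 : ℤ) ^ F.card
      + ∑ F ∈ A.filter (fun F => ¬ q1 F), (-1 : ℤ) ^ F.card := by
    rw [Msum, ← hA, Finset.sum_filter_add_sum_filter_not]
  have s2 : ∑ F ∈ A.filter (fun F => ¬ q2 F), (-1 : ℤ) ^ F.card
      = ∑ F ∈ (A.filter (fun F => ¬ q2 F)).filter q1, (-1 : ℤ) ^ F.card
      + ∑ F ∈ (A.filter (fun F => ¬ q2 F)).filter (fun F => ¬ q1 F), (-1 : ℤ) ^ F.card := by
    rw [Finset.sum_filter_add_sum_filter_not]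
  rw [s1, efil]
  have m1 : ∑ F ∈ A.filter (fun F => ¬ q1 F), (-1 : ℤ) ^ F.card = Msum G (insert (x,y) R) := by
    rw [e1, Msum]
  have m2 : ∑ F ∈ A.filter (fun F => ¬ q2 F), (-1 : ℤ) ^ F.card = Msum G (insert (y,x) R) := by
    rw [e2, Msum]
  have m3 : ∑ F ∈ (A.filter (fun F => ¬ q2 F)).filter (fun F => ¬ q1 F), (-1 : ℤ) ^ F.card
      = Msum G (insert (x,y) (insert (y,x) R)) := by
    rw [e3, Msum]
  rw [m1]
  have := s2
  rw [m2, m3] at this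
  linarith [this]

/-- base case: all edges covered -/
lemma Msum_base (hG : G.Connected) {R : Finset (V × V)}
    (hcov : ∀ a b : V, G.Adj a b → ((a, b) ∈ R ∨ (b, a) ∈ R)) :
    Msum G R = P R := by
  classical
  have hcons : (grnd R).powerset.filter (consis G) = (grnd R).powerset := by
    apply Finset.filter_true_of_mem
    intro F hF
    rw [Finset.mem_powerset] at hF
    rintro X hX Y hY ⟨a, b, hab, haX, haY, hbY, hbX⟩
    have hXg := mem_grnd.1 (hF hX)
    have hYg := mem_grnd.1 (hF hY)
    rcases hcov a b hab with h | h
    · exact hbX (hXg.2.2 (a,b) h haX)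
    · exact haY (hYg.2.2 (b,a) h hbY)
  rw [Msum, hcons, Finset.sum_powerset_neg_one_pow_card]
  by_cases hg : Good R
  · -- all vertices mutually reachable
    have hall : ∀ u v : V, Sym R u v := by
      intro u v
      obtain ⟨w⟩ := (hG.preconnected u v)
      induction w with
      | nil => exact Sym.refl R _
      | cons hcd p ih =>
        refine Sym.trans' ?_ ih
        rcases hcov _ _ hcd with h' | h'
        · exact good_preach_sym hg (preach_step h')
        · exact (good_preach_sym hg (preach_step h')).symm'
    have hne : Nonempty V := hG.nonempty
    obtain ⟨v0⟩ := hne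
    have hgrnd : grnd R = ∅ := by
      rw [Finset.eq_empty_iff_forall_notMem]
      intro U hU
      obtain ⟨hUne, hUuniv, hUcl⟩ := mem_grnd.1 hU
      obtain ⟨u, hu⟩ := hUne
      apply hUuniv
      ext v
      simp only [mem_univ, iff_true]
      exact Cl_preach hUcl (hall u v).1 hu
    have hkk : kk R = 1 := by
      rw [kk, Finset.card_eq_one]
      refine ⟨univ, ?_⟩
      ext D
      simp only [Finset.mem_image, Finset.mem_singleton]
      constructor
      · rintro ⟨u, -, rfl⟩
        ext v
        simp only [mem_cls, mem_univ, iff_true]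
        exact hall u v
      · rintro rfl
        exact ⟨v0, mem_univ _, by ext v; simp only [mem_cls, mem_univ, iff_true]; exact hall v0 v⟩
    rw [if_pos hgrnd, P, if_pos hg, hkk]
    norm_num
  · -- not good: there is a closed set, so sum is 0
    unfold Good at hg
    push_neg at hg
    obtain ⟨⟨a, b⟩, hab, hnab⟩ := hg
    have hnba : ¬ PReach R b a := fun h => hnab ⟨preach_step hab, h⟩
    have hgrnd : grnd R ≠ ∅ := by
      have : univ.filter (PReach R b) ∈ grnd R := by
        rw [mem_grnd]
        refine ⟨⟨b, by simp [Relation.ReflTransGen.refl, PReach]⟩, ?_, ?_⟩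
        · intro h
          apply hnba
          have : a ∈ univ.filter (PReach R b) := by rw [h]; exact mem_univ a
          exact (Finset.mem_filter.1 this).2
        · rintro p hp hp1
          rw [Finset.mem_filter] at hp1 ⊢
          exact ⟨mem_univ _, hp1.2.tail hp⟩
      exact Finset.ne_empty_of_mem this
    rw [if_neg hgrnd, P, if_neg (by unfold Good; push_neg; exact ⟨(a,b), hab, hnab⟩)]

/-- free (uncovered) edge pairs -/
noncomputable def fset (G : SimpleGraph V) (R : Finset (V × V)) : Finset (V × V) :=
  univ.filter (fun p => G.Adj p.1 p.2 ∧ p ∉ R ∧ p.swap ∉ R)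

lemma fset_insert_subset {R : Finset (V × V)} {x y : V} (hR : (x,y) ∈ fset G R)
    {R' : Finset (V × V)} (hR' : R ⊆ R') (hmem : (x,y) ∈ R' ∨ (y,x) ∈ R') :
    fset G R' ⊆ (fset G R).erase (x,y) := by
  intro p hp
  simp only [fset, Finset.mem_filter] at hp
  rw [Finset.mem_erase]
  constructor
  · rintro rfl
    rcases hmem with h | h
    · exact hp.2.2.1 h
    · exact hp.2.2.2 h
  · simp only [fset, Finset.mem_filter]
    exact ⟨mem_univ _, hp.2.1, fun h => hp.2.2.1 (hR' h), fun h => hp.2.2.2 (hR' h)⟩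

/-- THE MASTER THEOREM -/
theorem master (hG : G.Connected) : ∀ (n : ℕ) (R : Finset (V × V)),
    (fset G R).card ≤ n → Msum G R = P R := by
  intro n
  induction n with
  | zero =>
    intro R hcard
    apply Msum_base hG
    intro a b hab
    by_contra hcon
    push_neg at hcon
    have : (a, b) ∈ fset G R := by
      simp only [fset, Finset.mem_filter]
      exact ⟨mem_univ _, hab, hcon.1, hcon.2⟩
    have := Finset.card_pos.2 ⟨_, this⟩
    omega
  | succ n ih =>
    intro R hcard
    by_cases hf : fset G R = ∅
    · apply Msum_base hG
      intro a b hab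
      by_contra hcon
      push_neg at hcon
      have : (a, b) ∈ fset G R := by
        simp only [fset, Finset.mem_filter]
        exact ⟨mem_univ _, hab, hcon.1, hcon.2⟩
      rw [hf] at this
      exact absurd this (Finset.notMem_empty _)
    · obtain ⟨⟨x, y⟩, hp⟩ := Finset.nonempty_of_ne_empty hf
      have hadj : G.Adj x y := by
        simp only [fset, Finset.mem_filter] at hp
        exact hp.2.1
      have hcard' : ((fset G R).erase (x,y)).card ≤ n := by
        have := Finset.card_erase_of_mem hp
        omega
      have c1 : (fset G (insert (x,y) R)).card ≤ n :=
        le_trans (Finset.card_le_card (fset_insert_subset hp (Finset.subset_insert _ _)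
          (Or.inl (Finset.mem_insert_self _ _)))) hcard'
      have c2 : (fset G (insert (y,x) R)).card ≤ n :=
        le_trans (Finset.card_le_card (fset_insert_subset hp (Finset.subset_insert _ _)
          (Or.inr (Finset.mem_insert_self _ _)))) hcard'
      have c3 : (fset G (insert (x,y) (insert (y,x) R))).card ≤ n := by
        refine le_trans (Finset.card_le_card (fset_insert_subset hp ?_
          (Or.inl (Finset.mem_insert_self _ _)))) hcard'
        exact (Finset.subset_insert _ _).trans (Finset.subset_insert _ _)
      rw [Msum_rec hadj R, ih _ c1, ih _ c2, ih _ c3, ← P_rec]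


variable [DecidableRel G.Adj]

lemma GO.ext {O O' : GraphOrientation G} (h : ∀ a b, O.dir a b ↔ O'.dir a b) : O = O' := by
  obtain ⟨d, h1, h2⟩ := O
  obtain ⟨d', h1', h2'⟩ := O'
  have : d = d' := by
    funext a b
    exact propext (h a b)
  subst this
  rfl

lemma GO.total {O : GraphOrientation G} {a b : V} (h : G.Adj a b) :
    O.dir a b ∨ O.dir b a := by
  by_cases hd : O.dir b a
  · exact Or.inr hd
  · exact Or.inl ((O.dir_iff_not a b h).2 hd)

lemma GO.not_both {O : GraphOrientation G} {a b : V} (h1 : O.dir a b) (h2 : O.dir b a) :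
    False := by
  have hadj := O.adj_of_dir a b h1
  exact ((O.dir_iff_not a b hadj).1 h1) h2

noncomputable instance : Fintype (GraphOrientation G) := by
  classical
  apply Fintype.ofInjective (fun O : GraphOrientation G => fun a b => decide (O.dir a b))
  intro O O' h
  apply GO.ext
  intro a b
  have hab : decide (O.dir a b) = decide (O'.dir a b) := congrFun (congrFun h a) b
  constructor
  · intro hd
    exact of_decide_eq_true (hab ▸ decide_eq_true hd)
  · intro hd
    exact of_decide_eq_true (hab.symm ▸ decide_eq_true hd)

/-- flip an orientation on a set of edges -/
def flipO (O : GraphOrientation G) (S : Finset (Sym2 V)) : GraphOrientation G where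
  dir a b := (s(a,b) ∈ S ∧ O.dir b a) ∨ (s(a,b) ∉ S ∧ O.dir a b)
  adj_of_dir a b h := by
    rcases h with ⟨-, h⟩ | ⟨-, h⟩
    · exact (O.adj_of_dir b a h).symm
    · exact O.adj_of_dir a b h
  dir_iff_not a b hadj := by
    have hs : s(b,a) = s(a,b) := Sym2.eq_swap
    constructor
    · rintro (⟨hm, hd⟩ | ⟨hm, hd⟩) (⟨hm', hd'⟩ | ⟨hm', hd'⟩)
      · exact GO.not_both hd hd'
      · rw [hs] at hm'; exact hm' hm
      · rw [hs] at hm'; exact hm hm'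
      · exact GO.not_both hd' hd
    · intro hn
      by_cases hm : s(a,b) ∈ S
      · left
        refine ⟨hm, ?_⟩
        by_contra hd
        apply hn
        left
        rw [hs]
        exact ⟨hm, (O.dir_iff_not a b hadj).2 hd⟩
      · right
        refine ⟨hm, ?_⟩
        by_contra hd
        apply hn
        right
        rw [hs]
        have := (O.dir_iff_not b a hadj.symm).2 (fun h' => hd h')
        exact ⟨fun h' => hm (hs ▸ h'), this⟩


/-! ## orientation-side definitions -/

def OCl (O : GraphOrientation G) (U : Finset V) : Prop :=
  ∀ a b, O.dir a b → b ∈ U → a ∈ U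

def SCl (S : Finset (Sym2 V)) (U : Finset V) : Prop :=
  ∀ a b : V, s(a,b) ∈ S → (a ∈ U ↔ b ∈ U)

def cutF (F : Finset (Finset V)) (a b : V) : Prop := ∃ U ∈ F, a ∈ U ∧ b ∉ U

noncomputable def ordV [Fintype V] : V → V → Prop :=
  fun a b => (Fintype.equivFin V) a < (Fintype.equivFin V) b

lemma ordV_total {a b : V} (h : a ≠ b) : ordV a b ∨ ordV b a := by
  rcases lt_trichotomy ((Fintype.equivFin V) a) ((Fintype.equivFin V) b) with h' | h' | h'
  · exact Or.inl h'
  · exact absurd ((Fintype.equivFin V).injective h') h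
  · exact Or.inr h'

lemma ordV_asymm {a b : V} (h1 : ordV a b) (h2 : ordV b a) : False :=
  absurd (h1.trans h2) (lt_irrefl _)

lemma cutF_not_both {F : Finset (Finset V)} (hcons : consis G F) {a b : V}
    (hadj : G.Adj a b) (h1 : cutF F a b) (h2 : cutF F b a) : False := by
  obtain ⟨U, hU, haU, hbU⟩ := h1
  obtain ⟨U', hU', hbU', haU'⟩ := h2
  exact hcons U hU U' hU' ⟨a, b, hadj, haU, haU', hbU', hbU⟩

/-- the reference orientation adapted to a consistent family -/
noncomputable def refO (F : Finset (Finset V)) (hcons : consis G F) :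
    GraphOrientation G where
  dir a b := G.Adj a b ∧ (cutF F a b ∨ (¬ cutF F a b ∧ ¬ cutF F b a ∧ ordV a b))
  adj_of_dir a b h := h.1
  dir_iff_not a b hadj := by
    constructor
    · rintro ⟨-, (hc | ⟨hnc1, hnc2, hord⟩)⟩ ⟨-, (hc' | ⟨hnc1', hnc2', hord'⟩)⟩
      · exact cutF_not_both hcons hadj hc hc'
      · exact hnc2' hc
      · exact hnc2 hc'
      · exact ordV_asymm hord hord'
    · intro hn
      refine ⟨hadj, ?_⟩
      by_cases hc : cutF F a b
      · exact Or.inl hc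
      · by_cases hc' : cutF F b a
        · exact absurd ⟨hadj.symm, Or.inl hc'⟩ hn
        · rcases ordV_total hadj.ne with ho | ho
          · exact Or.inr ⟨hc, hc', ho⟩
          · exact absurd ⟨hadj.symm, Or.inr ⟨hc', hc, ho⟩⟩ hn

lemma refO_dir_of_cut {F : Finset (Finset V)} (hcons : consis G F) {a b : V}
    (hadj : G.Adj a b) (hc : cutF F a b) : (refO F hcons).dir a b := ⟨hadj, Or.inl hc⟩

lemma refO_OCl {F : Finset (Finset V)} (hcons : consis G F) {U : Finset V} (hU : U ∈ F) :
    OCl (refO F hcons) U := by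
  rintro a b ⟨hadj, hd⟩ hbU
  by_contra haU
  have hcut : cutF F b a := ⟨U, hU, hbU, haU⟩
  rcases hd with hc | ⟨hnc1, hnc2, -⟩
  · exact cutF_not_both hcons hadj hc hcut
  · exact hnc2 hcut

/-- the edges where two orientations differ -/
def DiffE (O O' : GraphOrientation G) (e : Sym2 V) : Prop :=
  ∃ a b, e = s(a,b) ∧ O.dir a b ∧ O'.dir b a

lemma diffE_spec {O O' : GraphOrientation G} {a b : V} :
    DiffE O O' s(a,b) ↔ (O.dir a b ∧ O'.dir b a) ∨ (O.dir b a ∧ O'.dir a b) := by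
  constructor
  · rintro ⟨x, y, hxy, h1, h2⟩
    rcases Sym2.eq_iff.1 hxy.symm with ⟨rfl, rfl⟩ | ⟨rfl, rfl⟩
    · exact Or.inl ⟨h1, h2⟩
    · exact Or.inr ⟨h1, h2⟩
  · rintro (⟨h1, h2⟩ | ⟨h1, h2⟩)
    · exact ⟨a, b, rfl, h1, h2⟩
    · exact ⟨b, a, Sym2.eq_swap.symm, h1, h2⟩

lemma flip_dir_mem {O : GraphOrientation G} {S : Finset (Sym2 V)} {a b : V}
    (h : s(a,b) ∈ S) : (flipO O S).dir a b ↔ O.dir b a := by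
  simp only [flipO, h, not_true]
  tauto

lemma flip_dir_not_mem {O : GraphOrientation G} {S : Finset (Sym2 V)} {a b : V}
    (h : s(a,b) ∉ S) : (flipO O S).dir a b ↔ O.dir a b := by
  simp only [flipO]
  tauto

/-- strong connectivity iff no closed set -/
lemma sc_iff (O : GraphOrientation G) :
    O.IsStronglyConnected ↔ (grnd (∅ : Finset (V × V))).filter (fun U => OCl O U) = ∅ := by
  constructor
  · intro hsc
    rw [Finset.eq_empty_iff_forall_notMem]
    intro U hU
    rw [Finset.mem_filter, mem_grnd] at hU
    obtain ⟨⟨⟨u, hu⟩, hUuniv, -⟩, hOCl⟩ := hU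
    have hv : ∃ v, v ∉ U := by
      by_contra hv
      push_neg at hv
      exact hUuniv (Finset.eq_univ_iff_forall.2 hv)
    obtain ⟨v, hv⟩ := hv
    have hr : O.Reaches v u := hsc v u
    -- closed sets absorb backwards
    have : v ∈ U := by
      have key : ∀ w z, O.Reaches w z → z ∈ U → w ∈ U := by
        intro w z hr
        induction hr with
        | refl => exact id
        | tail hr' hstep ih => exact fun hz => ih (hOCl _ _ hstep hz)
      exact key v u hr hu
    exact hv this
  · intro hempty u v
    set U := univ.filter (fun w => O.Reaches w v) with hU
    have hvU : v ∈ U := by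
      simp only [hU, Finset.mem_filter]
      exact ⟨mem_univ _, Relation.ReflTransGen.refl⟩
    have hOCl : OCl O U := by
      intro a b hab hb
      simp only [hU, Finset.mem_filter] at hb ⊢
      exact ⟨mem_univ _, Relation.ReflTransGen.head hab hb.2⟩
    have hUuniv : U = univ := by
      by_contra hne
      have : U ∈ (grnd (∅ : Finset (V × V))).filter (fun U => OCl O U) := by
        rw [Finset.mem_filter, mem_grnd]
        exact ⟨⟨⟨v, hvU⟩, hne, fun p hp => absurd hp (Finset.notMem_empty _)⟩, hOCl⟩
      rw [hempty] at this
      exact absurd this (Finset.notMem_empty _)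
    have : u ∈ U := hUuniv ▸ mem_univ u
    exact (Finset.mem_filter.1 this).2

lemma dir_forced {O : GraphOrientation G} {U : Finset V} (hcl : OCl O U) {a b : V}
    (hadj : G.Adj a b) (ha : a ∈ U) (hb : b ∉ U) : O.dir a b := by
  rcases GO.total (O := O) hadj with h | h
  · exact h
  · exact absurd (hcl b a h ha) hb

/-- the key counting identity for a fixed family -/
lemma count_F {F : Finset (Finset V)} :
    (((univ : Finset (GraphOrientation G)).filter (fun O => ∀ U ∈ F, OCl O U)).card : ℤ)
      = if consis G F then
          ((G.edgeFinset.powerset.filter (fun S => ∀ U ∈ F, SCl S U)).card : ℤ) else 0 := by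
  by_cases hcons : consis G F
  · rw [if_pos hcons]
    congr 1
    apply Finset.card_bij'
      (i := fun O _ => G.edgeFinset.filter (fun e => DiffE O (refO F hcons) e))
      (j := fun S _ => flipO (refO F hcons) S)
    · -- hi : forward lands in target
      intro O hO
      rw [Finset.mem_filter] at hO ⊢
      rw [Finset.mem_powerset]
      refine ⟨Finset.filter_subset _ _, ?_⟩
      intro U hU a b hab
      rw [Finset.mem_filter] at hab
      obtain ⟨he, hdiff⟩ := hab
      have hadj : G.Adj a b := (SimpleGraph.mem_edgeFinset).1 he
      have hOU : OCl O U := hO.2 U hU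
      by_cases ha : a ∈ U <;> by_cases hb : b ∈ U
      · exact iff_of_true ha hb
      · -- a ∈ U, b ∉ U : forced directions agree, contradiction with DiffE
        exfalso
        have h1 : O.dir a b := dir_forced hOU hadj ha hb
        have h2 : (refO F hcons).dir a b := refO_dir_of_cut hcons hadj ⟨U, hU, ha, hb⟩
        rcases diffE_spec.1 hdiff with ⟨g1, g2⟩ | ⟨g1, g2⟩
        · exact GO.not_both h2 g2
        · exact GO.not_both h1 g1
      · exfalso
        have h1 : O.dir b a := dir_forced hOU hadj.symm hb ha
        have h2 : (refO F hcons).dir b a := refO_dir_of_cut hcons hadj.symm ⟨U, hU, hb, ha⟩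
        rcases diffE_spec.1 hdiff with ⟨g1, g2⟩ | ⟨g1, g2⟩
        · exact GO.not_both h1 g1
        · exact GO.not_both h2 g2
      · exact iff_of_false ha hb
    · -- hj : backward lands in source
      intro S hS
      rw [Finset.mem_filter] at hS ⊢
      rw [Finset.mem_powerset] at hS
      refine ⟨mem_univ _, ?_⟩
      intro U hU a b hab hbU
      by_contra haU
      have hadj : G.Adj a b := (flipO (refO F hcons) S).adj_of_dir a b hab
      have hnS : s(a,b) ∉ S := by
        intro hmem
        exact haU ((hS.2 U hU a b hmem).2 hbU)
      rw [flip_dir_not_mem hnS] at hab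
      exact haU (refO_OCl hcons hU a b hab hbU)
    · -- left inverse
      intro O hO
      apply GO.ext
      intro a b
      by_cases hadj : G.Adj a b
      · have he : s(a,b) ∈ G.edgeFinset := SimpleGraph.mem_edgeFinset.2 hadj
        by_cases hd : DiffE O (refO F hcons) s(a,b)
        · have hmem : s(a,b) ∈ G.edgeFinset.filter (fun e => DiffE O (refO F hcons) e) :=
            Finset.mem_filter.2 ⟨he, hd⟩
          rw [flip_dir_mem hmem]
          rcases diffE_spec.1 hd with ⟨h1, h2⟩ | ⟨h1, h2⟩
          · exact iff_of_true h2 h1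
          · exact iff_of_false (fun h' => GO.not_both h2 h') (fun h' => GO.not_both h' h1)
        · have hmem : s(a,b) ∉ G.edgeFinset.filter (fun e => DiffE O (refO F hcons) e) :=
            fun hm => hd (Finset.mem_filter.1 hm).2
          rw [flip_dir_not_mem hmem]
          rcases GO.total (O := O) hadj with h1 | h1 <;>
            rcases GO.total (O := refO F hcons) hadj with h2 | h2
          · exact iff_of_true h2 h1
          · exact absurd (diffE_spec.2 (Or.inl ⟨h1, h2⟩)) hd
          · exact absurd (diffE_spec.2 (Or.inr ⟨h1, h2⟩)) hd
          · exact iff_of_false (fun h' => GO.not_both h' h2) (fun h' => GO.not_both h' h1)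
      · exact iff_of_false
          (fun h' => hadj ((flipO (refO F hcons) _).adj_of_dir a b h'))
          (fun h' => hadj (O.adj_of_dir a b h'))
    · -- right inverse
      intro S hS
      rw [Finset.mem_filter, Finset.mem_powerset] at hS
      ext e
      induction e using Sym2.ind with
      | _ a b =>
        rw [Finset.mem_filter]
        constructor
        · rintro ⟨he, hdiff⟩
          by_contra hnS
          rcases diffE_spec.1 hdiff with ⟨h1, h2⟩ | ⟨h1, h2⟩
          · rw [flip_dir_not_mem hnS] at h1
            exact GO.not_both h1 h2
          · have hnS' : s(b,a) ∉ S := fun hm => hnS (Sym2.eq_swap ▸ hm)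
            rw [flip_dir_not_mem hnS'] at h1
            exact GO.not_both h1 h2
        · intro hmem
          have he : s(a,b) ∈ G.edgeFinset := hS.1 hmem
          have hadj : G.Adj a b := SimpleGraph.mem_edgeFinset.1 he
          refine ⟨he, ?_⟩
          rcases GO.total (O := refO F hcons) hadj with h2 | h2
          · refine diffE_spec.2 (Or.inr ⟨?_, h2⟩)
            have hmem' : s(b,a) ∈ S := Sym2.eq_swap ▸ hmem
            rw [flip_dir_mem hmem']
            exact h2
          · refine diffE_spec.2 (Or.inl ⟨?_, h2⟩)
            rw [flip_dir_mem hmem]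
            exact h2
  · rw [if_neg hcons]
    norm_cast
    rw [Finset.card_eq_zero, Finset.eq_empty_iff_forall_notMem]
    intro O hO
    rw [Finset.mem_filter] at hO
    apply hcons
    rintro X hX Y hY ⟨a, b, hadj, haX, haY, hbY, hbX⟩
    have h1 : O.dir a b := dir_forced (hO.2 X hX) hadj haX hbX
    have h2 : O.dir b a := dir_forced (hO.2 Y hY) hadj.symm hbY haY
    exact GO.not_both h1 h2

/-! ## linking subsets of edges to pair relations -/

noncomputable def Rof (S : Finset (Sym2 V)) : Finset (V × V) :=
  (univ : Finset (V × V)).filter (fun p => s(p.1, p.2) ∈ S)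

lemma mem_Rof {S : Finset (Sym2 V)} {a b : V} : (a,b) ∈ Rof S ↔ s(a,b) ∈ S := by
  simp [Rof]

lemma Cl_Rof_iff {S : Finset (Sym2 V)} {U : Finset V} : Cl (Rof S) U ↔ SCl S U := by
  constructor
  · intro h a b hab
    constructor
    · exact h (a,b) (mem_Rof.2 hab)
    · exact h (b,a) (mem_Rof.2 (by rwa [Sym2.eq_swap]))
  · intro h p hp hp1
    exact (h p.1 p.2 (mem_Rof.1 hp)).1 hp1

lemma good_Rof {S : Finset (Sym2 V)} : Good (Rof S) := by
  intro p hp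
  have h1 : (p.1, p.2) ∈ Rof S := hp
  have h2 : (p.2, p.1) ∈ Rof S := by
    rw [mem_Rof]
    rw [Sym2.eq_swap]
    exact mem_Rof.1 hp
  exact ⟨preach_step h1, preach_step h2⟩

lemma prel_Rof_iff {S : Finset (Sym2 V)} (hS : S ⊆ G.edgeFinset) {a b : V} :
    prel (Rof S) a b ↔ (SimpleGraph.fromEdgeSet (↑S : Set (Sym2 V))).Adj a b := by
  rw [SimpleGraph.fromEdgeSet_adj]
  constructor
  · intro h
    have hmem : s(a,b) ∈ S := mem_Rof.1 h
    have hadj : G.Adj a b := SimpleGraph.mem_edgeFinset.1 (hS hmem)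
    exact ⟨Finset.mem_coe.2 hmem, hadj.ne⟩
  · rintro ⟨h, -⟩
    exact mem_Rof.2 (Finset.mem_coe.1 h)

lemma sym_Rof_iff {S : Finset (Sym2 V)} (hS : S ⊆ G.edgeFinset) {u v : V} :
    Sym (Rof S) u v ↔ (SimpleGraph.fromEdgeSet (↑S : Set (Sym2 V))).Reachable u v := by
  have hre : ∀ x y : V, PReach (Rof S) x y ↔
      (SimpleGraph.fromEdgeSet (↑S : Set (Sym2 V))).Reachable x y := by
    intro x y
    rw [SimpleGraph.reachable_iff_reflTransGen]
    constructor
    · exact Relation.ReflTransGen.mono (fun a b h => (prel_Rof_iff hS).1 h) x y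
    · exact Relation.ReflTransGen.mono (fun a b h => (prel_Rof_iff hS).2 h) x y
  constructor
  · intro h
    exact (hre u v).1 h.1
  · intro h
    exact ⟨(hre u v).2 h, (hre v u).2 h.symm⟩

lemma kk_Rof {S : Finset (Sym2 V)} (hS : S ⊆ G.edgeFinset) :
    kk (Rof S) = numComponents V (↑S : Set (Sym2 V)) := by
  classical
  unfold numComponents
  have hwd : ∀ u v : V, (SimpleGraph.fromEdgeSet (↑S : Set (Sym2 V))).Reachable u v →
      (⟨cls (Rof S) u, Finset.mem_image_of_mem _ (mem_univ u)⟩ :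
        ↥(univ.image (cls (Rof S)))) = ⟨cls (Rof S) v, Finset.mem_image_of_mem _ (mem_univ v)⟩ := by
    intro u v h
    exact Subtype.ext (cls_eq_of_sym ((sym_Rof_iff hS).2 h))
  let f : (SimpleGraph.fromEdgeSet (↑S : Set (Sym2 V))).ConnectedComponent →
      ↥(univ.image (cls (Rof S))) :=
    Quot.lift (fun v => ⟨cls (Rof S) v, Finset.mem_image_of_mem _ (mem_univ v)⟩) hwd
  have hbij : Function.Bijective f := by
    constructor
    · intro c1 c2
      refine Quot.induction_on₂ c1 c2 ?_
      intro u v h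
      apply Quot.sound
      apply (sym_Rof_iff hS).1
      have h' : cls (Rof S) u = cls (Rof S) v := by
        have h2 := congrArg Subtype.val h
        simpa [f] using h2
      exact sym_of_cls_eq h'
    · rintro ⟨D, hD⟩
      obtain ⟨u, -, rfl⟩ := Finset.mem_image.1 hD
      exact ⟨Quot.mk _ u, rfl⟩
  have := Nat.card_congr (Equiv.ofBijective f hbij)
  rw [Nat.card_eq_finsetCard] at this
  rw [kk, ← this]

lemma Msum_Rof (hG : G.Connected) {S : Finset (Sym2 V)} (hS : S ⊆ G.edgeFinset) :
    Msum G (Rof S) = (-1 : ℤ) ^ (numComponents V (↑S : Set (Sym2 V)) - 1) := by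
  rw [master hG (fset G (Rof S)).card (Rof S) le_rfl, P, if_pos good_Rof, kk_Rof hS]

theorem pipeline (hG : G.Connected) :
    (((univ : Finset (GraphOrientation G)).filter
        (fun O => O.IsStronglyConnected)).card : ℤ)
      = ∑ S ∈ G.edgeFinset.powerset,
          (-1 : ℤ) ^ (numComponents V (↑S : Set (Sym2 V)) - 1) := by
  classical
  have h1 : ∀ O : GraphOrientation G,
      (if O.IsStronglyConnected then (1 : ℤ) else 0)
        = ∑ F ∈ (grnd (∅ : Finset (V × V))).powerset,
            (if (∀ U ∈ F, OCl O U) then (-1 : ℤ) ^ F.card else 0) := by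
    intro O
    rw [← Finset.sum_filter]
    have e : (grnd (∅ : Finset (V × V))).powerset.filter (fun F => ∀ U ∈ F, OCl O U)
        = ((grnd (∅ : Finset (V × V))).filter (fun U => OCl O U)).powerset := by
      ext F
      simp only [Finset.mem_filter, Finset.mem_powerset]
      constructor
      · rintro ⟨hsub, hcl⟩ X hX
        exact Finset.mem_filter.2 ⟨hsub hX, hcl X hX⟩
      · intro hsub
        exact ⟨fun X hX => (Finset.mem_filter.1 (hsub hX)).1,
          fun X hX => (Finset.mem_filter.1 (hsub hX)).2⟩
    rw [e, Finset.sum_powerset_neg_one_pow_card]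
    by_cases hsc : O.IsStronglyConnected
    · rw [if_pos hsc, if_pos ((sc_iff O).1 hsc)]
    · rw [if_neg hsc, if_neg (fun h => hsc ((sc_iff O).2 h))]
  rw [← Finset.sum_boole]
  calc (∑ O : GraphOrientation G, if O.IsStronglyConnected then (1:ℤ) else 0)
      = ∑ O : GraphOrientation G, ∑ F ∈ (grnd (∅ : Finset (V × V))).powerset,
          (if (∀ U ∈ F, OCl O U) then (-1 : ℤ) ^ F.card else 0) :=
        Finset.sum_congr rfl (fun O _ => h1 O)
    _ = ∑ F ∈ (grnd (∅ : Finset (V × V))).powerset, ∑ O : GraphOrientation G,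
          (if (∀ U ∈ F, OCl O U) then (-1 : ℤ) ^ F.card else 0) := Finset.sum_comm
    _ = ∑ F ∈ (grnd (∅ : Finset (V × V))).powerset,
          (-1 : ℤ) ^ F.card * ((univ.filter
            (fun O : GraphOrientation G => ∀ U ∈ F, OCl O U)).card : ℤ) := by
        refine Finset.sum_congr rfl (fun F _ => ?_)
        rw [← Finset.sum_filter, Finset.sum_const, nsmul_eq_mul, mul_comm]
    _ = ∑ F ∈ (grnd (∅ : Finset (V × V))).powerset,
          (-1 : ℤ) ^ F.card * (if consis G F then
            ((G.edgeFinset.powerset.filter (fun S => ∀ U ∈ F, SCl S U)).card : ℤ) else 0) := by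
        refine Finset.sum_congr rfl (fun F _ => ?_)
        rw [count_F]
    _ = ∑ F ∈ (grnd (∅ : Finset (V × V))).powerset,
          (if consis G F then (-1 : ℤ) ^ F.card *
            ((G.edgeFinset.powerset.filter (fun S => ∀ U ∈ F, SCl S U)).card : ℤ) else 0) := by
        refine Finset.sum_congr rfl (fun F _ => ?_)
        rw [mul_ite, mul_zero]
    _ = ∑ F ∈ ((grnd (∅ : Finset (V × V))).powerset.filter (fun F => consis G F)),
          (-1 : ℤ) ^ F.card *
            ((G.edgeFinset.powerset.filter (fun S => ∀ U ∈ F, SCl S U)).card : ℤ) := by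
        rw [Finset.sum_filter]
    _ = ∑ F ∈ ((grnd (∅ : Finset (V × V))).powerset.filter (fun F => consis G F)),
          ∑ S ∈ G.edgeFinset.powerset,
            (if (∀ U ∈ F, SCl S U) then (-1 : ℤ) ^ F.card else 0) := by
        refine Finset.sum_congr rfl (fun F _ => ?_)
        rw [← Finset.sum_boole, Finset.mul_sum]
        refine Finset.sum_congr rfl (fun S _ => ?_)
        rw [mul_ite, mul_one, mul_zero]
    _ = ∑ S ∈ G.edgeFinset.powerset,
          ∑ F ∈ ((grnd (∅ : Finset (V × V))).powerset.filter (fun F => consis G F)),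
            (if (∀ U ∈ F, SCl S U) then (-1 : ℤ) ^ F.card else 0) := Finset.sum_comm
    _ = ∑ S ∈ G.edgeFinset.powerset, Msum G (Rof S) := by
        refine Finset.sum_congr rfl (fun S hS => ?_)
        rw [← Finset.sum_filter]
        rw [Msum]
        congr 1
        ext F
        simp only [Finset.mem_filter, Finset.mem_powerset]
        constructor
        · rintro ⟨⟨hsub, hcons⟩, hscl⟩
          refine ⟨fun X hX => ?_, hcons⟩
          have h1 := mem_grnd.1 (hsub hX)
          exact mem_grnd.2 ⟨h1.1, h1.2.1, Cl_Rof_iff.2 (hscl X hX)⟩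
        · rintro ⟨hsub, hcons⟩
          refine ⟨⟨fun X hX => ?_, hcons⟩, fun X hX => ?_⟩
          · have h1 := mem_grnd.1 (hsub hX)
            exact mem_grnd.2 ⟨h1.1, h1.2.1, fun p hp => absurd hp (Finset.notMem_empty _)⟩
          · exact Cl_Rof_iff.1 (mem_grnd.1 (hsub hX)).2.2
    _ = ∑ S ∈ G.edgeFinset.powerset,
          (-1 : ℤ) ^ (numComponents V (↑S : Set (Sym2 V)) - 1) := by
        refine Finset.sum_congr rfl (fun S hS => ?_)
        exact Msum_Rof hG (Finset.mem_powerset.1 hS)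

end TutteSC

theorem statement17 {V : Type*} [Fintype V] [DecidableEq V] (G : SimpleGraph V)
    [DecidableRel G.Adj] (hG : G.Connected) :
    ({O : GraphOrientation G | O.IsStronglyConnected}.ncard : ℤ) =
      ∑ S ∈ G.edgeFinset.powerset,
        ((((-1 : ℤˣ) ^ ((numComponents V (↑S : Set (Sym2 V)) : ℤ) - 1) : ℤˣ)) : ℤ) := by
  classical
  have hset : {O : GraphOrientation G | O.IsStronglyConnected}
      = ↑(Finset.univ.filter (fun O : GraphOrientation G => O.IsStronglyConnected)) := by
    ext O
    simp
  rw [hset, Set.ncard_coe_finset, TutteSC.pipeline hG]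
  refine Finset.sum_congr rfl (fun S hS => ?_)
  have hc : 1 ≤ numComponents V (↑S : Set (Sym2 V)) := by
    have hne : Nonempty ((SimpleGraph.fromEdgeSet (↑S : Set (Sym2 V))).ConnectedComponent) := by
      obtain ⟨v⟩ := hG.nonempty
      exact ⟨(SimpleGraph.fromEdgeSet (↑S : Set (Sym2 V))).connectedComponentMk v⟩
    have hfin : Finite ((SimpleGraph.fromEdgeSet (↑S : Set (Sym2 V))).ConnectedComponent) :=
      Quot.finite _
    exact Nat.one_le_iff_ne_zero.2 (Nat.card_ne_zero.2 ⟨hne, hfin⟩)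
  have hcast : ((numComponents V (↑S : Set (Sym2 V)) : ℤ) - 1)
      = ((numComponents V (↑S : Set (Sym2 V)) - 1 : ℕ) : ℤ) := by
    omega
  rw [hcast, zpow_natCast, Units.val_pow_eq_pow_val]
  norm_num
end
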